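/- For k ≥ 1, Z_w(k)(t) = t^p ((1-bt)(A_w(t)-1) + t^p)^{k-1} / ((1-bt)A_w(t) + t^p)^{k+1}, where A_w is the autocorrelation polynomial; in particular Z_w(k)(1/b) = b^p for all k ≥ 1, and Z_w(0)(1/b) = b^p A_w(1/b). -/

import Mathlib

open scoped BigOperators
open PowerSeries

/-- Number of (possibly overlapping) occurrences of the block `w` in `X`. -/
def occCount {α : Type*} [DecidableEq α] (w X : List α) : ℕ :=
  ((List.range X.length).filter fun i => (X.drop i).take w.length = w).length

/-- Number of strings of length `l` over `{0,…,b-1}` with exactly `k` occurrences of `w`,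
starting with `x` and ending with `y` (an empty `x` or `y` imposes no constraint). -/
def Nxy (b : ℕ) (w x y : List (Fin b)) (k l : ℕ) : ℕ :=
  Fintype.card {f : Fin l → Fin b //
    occCount w (List.ofFn f) = k ∧ x <+: List.ofFn f ∧ y <:+ List.ofFn f}

/-- The generating series `Z_w(x,k,y)(t)` as a formal power series over `ℚ`. -/
noncomputable def Zser (b : ℕ) (w x y : List (Fin b)) (k : ℕ) : PowerSeries ℚ :=
  PowerSeries.mk fun l => (Nxy b w x y k l : ℚ)

/-- The autocorrelation power series (polynomial) `A_w = Σ_{0≤i<p} c_i t^i`, where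
`c_i = 1` iff the length-`(p-i)` prefix of `w` equals its length-`(p-i)` suffix. -/
noncomputable def Aw (b : ℕ) (w : List (Fin b)) : PowerSeries ℚ :=
  ∑ i ∈ Finset.range w.length,
    if w.take (w.length - i) = w.drop i then (X : PowerSeries ℚ) ^ i else 0

namespace S15

variable {b : ℕ}

/-- all length-`l` strings -/
def Lists (b l : ℕ) : Finset (List (Fin b)) := Finset.univ.image (List.ofFn : (Fin l → Fin b) → _)

lemma mem_Lists {l : ℕ} {X : List (Fin b)} : X ∈ Lists b l ↔ X.length = l := by
  simp only [Lists, Finset.mem_image, Finset.mem_univ, true_and]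
  constructor
  · rintro ⟨f, rfl⟩; simp
  · rintro rfl
    exact ⟨X.get, List.ofFn_get X⟩

lemma card_Lists (l : ℕ) : (Lists b l).card = b ^ l := by
  rw [Lists, Finset.card_image_of_injective _ List.ofFn_injective]
  simp [Fintype.card_fun]

/-- count of length-`l` strings satisfying `P` -/
def cnt (b l : ℕ) (P : List (Fin b) → Prop) [DecidablePred P] : ℕ :=
  ((Lists b l).filter P).card

lemma Nxy_eq_cnt (w : List (Fin b)) (k l : ℕ) :
    Nxy b w [] [] k l = cnt b l (fun X => occCount w X = k) := by
  rw [Nxy, cnt, Lists, Finset.filter_image,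
    Finset.card_image_of_injective _ List.ofFn_injective, Fintype.card_subtype]
  congr 1
  apply Finset.filter_congr
  intro f _
  simp

/-- occurrence of `w` in `X` starting at `t` -/
def oA (w X : List (Fin b)) (t : ℕ) : Prop := (X.drop t).take w.length = w

instance (w X : List (Fin b)) (t : ℕ) : Decidable (oA w X t) := by
  unfold oA; infer_instance

lemma occCount_eq (w X : List (Fin b)) :
    occCount w X = ∑ t ∈ Finset.range X.length, if oA w X t then 1 else 0 := by
  rw [occCount, ← Finset.card_filter]
  rfl

/-- number of occurrences starting in `[a, c)` -/
def oCnt (w X : List (Fin b)) (a c : ℕ) : ℕ :=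
  ∑ t ∈ Finset.Ico a c, if oA w X t then 1 else 0

lemma occCount_eq_oCnt (w X : List (Fin b)) : occCount w X = oCnt w X 0 X.length := by
  rw [occCount_eq, oCnt, Finset.range_eq_Ico]

lemma oA.le {w X : List (Fin b)} {t : ℕ} (hw : 1 ≤ w.length) (h : oA w X t) :
    t + w.length ≤ X.length := by
  have h2 : (X.drop t).take w.length <+: X.drop t := List.take_prefix _ _
  rw [h] at h2
  have := h2.length_le
  simp only [List.length_drop] at this
  omega

lemma oA_iff_of_le {w X : List (Fin b)} {t : ℕ} (ht : t + w.length ≤ X.length) :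
    oA w X t ↔ w <+: X.drop t := by
  rw [List.prefix_iff_eq_take, oA, eq_comm]

lemma oA_append_left {w X Y : List (Fin b)} {t : ℕ} (ht : t + w.length ≤ X.length) :
    oA w (X ++ Y) t ↔ oA w X t := by
  unfold oA
  rw [List.drop_append_of_le_length (by omega), List.take_append_of_le_length (by simp; omega)]

lemma oA_drop {w X : List (Fin b)} {s t : ℕ} : oA w (X.drop s) t ↔ oA w X (s + t) := by
  unfold oA
  rw [List.drop_drop]

lemma oA_take {w X : List (Fin b)} {u t : ℕ} (h : t + w.length ≤ u) :
    oA w (X.take u) t ↔ oA w X t := by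
  unfold oA
  rw [List.drop_take]
  constructor
  · intro h'
    have hl := congrArg List.length h'
    simp only [List.length_take, List.length_drop] at hl
    rw [List.take_take, min_eq_left (by omega)] at h'
    exact h'
  · intro h'
    rw [List.take_take, min_eq_left (by omega)]
    exact h'

lemma oA_suffix {w X : List (Fin b)} (hw : w.length ≤ X.length) :
    oA w X (X.length - w.length) ↔ w <:+ X := by
  rw [List.suffix_iff_eq_drop, oA]
  have h1 : (X.drop (X.length - w.length)).take w.length = X.drop (X.length - w.length) :=
    List.take_of_length_le (by simp; omega)
  rw [h1, eq_comm]

lemma drop_eq_of_suffix {w X : List (Fin b)} (h : w <:+ X) (hl : X.length = w.length + (X.length - w.length)) :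
    X.drop (X.length - w.length) = w := by
  rw [List.suffix_iff_eq_drop] at h
  exact h.symm

lemma oCnt_split (w X : List (Fin b)) {a m c : ℕ} (h1 : a ≤ m) (h2 : m ≤ c) :
    oCnt w X a c = oCnt w X a m + oCnt w X m c :=
  (Finset.sum_Ico_consecutive _ h1 h2).symm

lemma oCnt_congr {w X Y : List (Fin b)} {a c : ℕ}
    (h : ∀ t, a ≤ t → t < c → (oA w X t ↔ oA w Y t)) : oCnt w X a c = oCnt w Y a c := by
  unfold oCnt
  apply Finset.sum_congr rfl
  intro t ht
  rw [Finset.mem_Ico] at ht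
  exact if_congr (h t ht.1 ht.2) rfl rfl

lemma oCnt_eq_zero {w X : List (Fin b)} {a c : ℕ}
    (h : ∀ t, a ≤ t → t < c → ¬ oA w X t) : oCnt w X a c = 0 := by
  unfold oCnt
  apply Finset.sum_eq_zero
  intro t ht
  rw [Finset.mem_Ico] at ht
  simp [h t ht.1 ht.2]

lemma oCnt_pos {w X : List (Fin b)} {a c t : ℕ} (ha : a ≤ t) (hc : t < c) (h : oA w X t) :
    1 ≤ oCnt w X a c := by
  unfold oCnt
  calc 1 = (if oA w X t then 1 else 0) := by rw [if_pos h]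
  _ = ∑ s ∈ {t}, if oA w X s then 1 else 0 := (Finset.sum_singleton _ _).symm
  _ ≤ _ := Finset.sum_le_sum_of_subset (by simp [Finset.mem_Ico]; omega)

lemma oCnt_drop (w X : List (Fin b)) (s a c : ℕ) :
    oCnt w (X.drop s) a c = oCnt w X (s + a) (s + c) := by
  unfold oCnt
  rw [Finset.sum_Ico_eq_sum_range, Finset.sum_Ico_eq_sum_range]
  have : s + c - (s + a) = c - a := by omega
  rw [this]
  apply Finset.sum_congr rfl
  intro t _
  exact if_congr (by rw [oA_drop, Nat.add_assoc]) rfl rfl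

/-- first occurrence of `w` in `X` starting at position `≥ a` (or `X.length` if none) -/
def fo (w X : List (Fin b)) (a : ℕ) : ℕ :=
  Nat.find (⟨X.length, Or.inr le_rfl⟩ : ∃ t, (a ≤ t ∧ oA w X t) ∨ X.length ≤ t)

lemma fo_le (w X : List (Fin b)) (a : ℕ) : fo w X a ≤ X.length :=
  Nat.find_min' _ (Or.inr le_rfl)

lemma fo_le_of {w X : List (Fin b)} {a q : ℕ} (h1 : a ≤ q) (h2 : oA w X q) : fo w X a ≤ q :=
  Nat.find_min' _ (Or.inl ⟨h1, h2⟩)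

lemma fo_min {w X : List (Fin b)} {a t : ℕ} (h : t < fo w X a) : ¬ (a ≤ t ∧ oA w X t) := by
  have := Nat.find_min _ h
  tauto

lemma fo_spec {w X : List (Fin b)} {a : ℕ} (h : fo w X a < X.length) :
    a ≤ fo w X a ∧ oA w X (fo w X a) := by
  have := Nat.find_spec (⟨X.length, Or.inr le_rfl⟩ :
    ∃ t, (a ≤ t ∧ oA w X t) ∨ X.length ≤ t)
  rcases this with h' | h'
  · exact h'
  · exact absurd h (Nat.not_lt.2 h')

lemma fo_eq {w X : List (Fin b)} {a q : ℕ} (hw : 1 ≤ w.length) (h1 : a ≤ q) (h2 : oA w X q)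
    (h3 : ∀ t, a ≤ t → t < q → ¬ oA w X t) : fo w X a = q := by
  have hle : fo w X a ≤ q := fo_le_of h1 h2
  have hq : q < X.length := by have := h2.le hw; omega
  rcases Nat.lt_or_ge (fo w X a) q with h | h
  · have := fo_spec (lt_of_lt_of_le h (le_of_lt hq))
    exact absurd this.2 (h3 _ this.1 h)
  · exact le_antisymm hle h

/-- `cnt` basics -/
lemma cnt_congr {l : ℕ} {P Q : List (Fin b) → Prop} [DecidablePred P] [DecidablePred Q]
    (h : ∀ X : List (Fin b), X.length = l → (P X ↔ Q X)) : cnt b l P = cnt b l Q := by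
  unfold cnt
  congr 1
  apply Finset.filter_congr
  intro X hX
  simp only [mem_Lists] at hX
  simp only [h X hX]

lemma cnt_eq_zero {l : ℕ} {P : List (Fin b) → Prop} [DecidablePred P]
    (h : ∀ X : List (Fin b), X.length = l → ¬ P X) : cnt b l P = 0 := by
  unfold cnt
  rw [Finset.card_eq_zero, Finset.filter_eq_empty_iff]
  intro X hX
  exact h X (mem_Lists.1 hX)

lemma cnt_nil (P : List (Fin b) → Prop) [DecidablePred P] :
    cnt b 0 P = if P [] then 1 else 0 := by
  have : Lists b 0 = {[]} := by
    ext X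
    simp [mem_Lists, List.length_eq_zero_iff]
  rw [cnt, this, Finset.filter_singleton]
  split <;> simp

lemma cnt_add {l : ℕ} {P Q : List (Fin b) → Prop} [DecidablePred P] [DecidablePred Q]
    (h : ∀ X : List (Fin b), ¬ (P X ∧ Q X)) :
    cnt b l P + cnt b l Q = cnt b l (fun X => P X ∨ Q X) := by
  unfold cnt
  rw [← Finset.card_union_of_disjoint, ← Finset.filter_or]
  rw [Finset.disjoint_filter]
  intro X _ hP hQ
  exact h X ⟨hP, hQ⟩

lemma cnt_fiber {l N : ℕ} {P : List (Fin b) → Prop} [DecidablePred P]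
    (g : List (Fin b) → ℕ) (hg : ∀ X : List (Fin b), X.length = l → P X → g X < N) :
    cnt b l P = ∑ j ∈ Finset.range N, cnt b l (fun X => P X ∧ g X = j) := by
  unfold cnt
  rw [Finset.card_eq_sum_card_fiberwise (t := Finset.range N)
    (f := g) (fun X hX => by
      simp only [Finset.mem_coe, Finset.mem_filter, mem_Lists] at hX
      simp [hg X hX.1 hX.2])]
  apply Finset.sum_congr rfl
  intro j _
  congr 1
  rw [Finset.filter_filter]

lemma cnt_succ (hb : 0 < b) {l : ℕ} (P : List (Fin b) → Prop) [DecidablePred P] :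
    cnt b (l + 1) P = ∑ a : Fin b, cnt b l (fun u => P (u ++ [a])) := by
  unfold cnt
  rw [Finset.card_eq_sum_card_fiberwise (t := (Finset.univ : Finset (Fin b)))
    (f := fun X => (X.getLast?).getD ⟨0, hb⟩) (fun X _ => Finset.mem_univ _)]
  apply Finset.sum_congr rfl
  intro a _
  apply Finset.card_bij' (fun X _ => X.dropLast) (fun u _ => u ++ [a])
  · intro X hX
    simp only [Finset.mem_filter, mem_Lists] at hX ⊢
    obtain ⟨⟨hlen, hP⟩, hlast⟩ := hX
    have hne : X ≠ [] := by intro h; rw [h] at hlen; simp at hlen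
    have hgl : X.getLast hne = a := by
      rw [List.getLast?_eq_getLast hne] at hlast
      simpa using hlast
    have hX' : X.dropLast ++ [a] = X := by rw [← hgl]; exact List.dropLast_append_getLast hne
    constructor
    · simp [List.length_dropLast, hlen]
    · rw [hX']; exact hP
  · intro u hu
    simp only [Finset.mem_filter, mem_Lists] at hu ⊢
    refine ⟨⟨?_, hu.2⟩, ?_⟩
    · simp [hu.1]
    · simp
  · intro X hX
    simp only [Finset.mem_filter, mem_Lists] at hX
    obtain ⟨⟨hlen, _⟩, hlast⟩ := hX
    have hne : X ≠ [] := by intro h; rw [h] at hlen; simp at hlen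
    have hgl : X.getLast hne = a := by
      rw [List.getLast?_eq_getLast hne] at hlast
      simpa using hlast
    rw [← hgl]; exact List.dropLast_append_getLast hne
  · intro u _
    simp

variable (w : List (Fin b))

def zc (k l : ℕ) : ℕ := cnt b l fun X => occCount w X = k
def mm (l : ℕ) : ℕ := cnt b l fun X => occCount w X = 1 ∧ w <:+ X
def yy (j l : ℕ) : ℕ := cnt b l fun u => oCnt w (w ++ u) 1 (w.length + u.length) = j
def dd (l : ℕ) : ℕ := cnt b l fun u =>
  oCnt w (w ++ u) 1 (w.length + u.length) = 1 ∧ w <:+ (w ++ u)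
def ss (n : ℕ) : ℕ := cnt b (w.length + n) fun s =>
  s.take w.length = w ∧ oA w s n ∧ oCnt w s 1 (n + 1 - w.length) = 0
def cc (i : ℕ) : ℕ := if i < w.length ∧ w.take (w.length - i) = w.drop i then 1 else 0

/-- snoc behaviour of occurrence counts -/
lemma oCnt_snoc (hw : 1 ≤ w.length) (X : List (Fin b)) (a : Fin b) {s : ℕ}
    (hs : s + w.length ≤ X.length + 1) :
    oCnt w (X ++ [a]) s (X.length + 1) =
      oCnt w X s X.length +
        (if oA w (X ++ [a]) (X.length + 1 - w.length) then 1 else 0) := by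
  set p := w.length with hp
  set c₀ := X.length + 1 - p with hc
  have h1 : s ≤ c₀ := by omega
  have h2 : c₀ ≤ X.length + 1 := by omega
  have h3 : c₀ ≤ X.length := by omega
  rw [oCnt_split w (X ++ [a]) h1 h2, oCnt_split w X h1 h3]
  have e1 : oCnt w (X ++ [a]) s c₀ = oCnt w X s c₀ :=
    oCnt_congr (fun t _ ht2 => oA_append_left (by omega))
  have e2 : oCnt w X c₀ X.length = 0 := by
    apply oCnt_eq_zero
    intro t ht1 _ hA
    have := hA.le hw
    omega
  have e3 : oCnt w (X ++ [a]) c₀ (X.length + 1) =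
      if oA w (X ++ [a]) c₀ then 1 else 0 := by
    unfold oCnt
    apply Finset.sum_eq_single_of_mem
    · rw [Finset.mem_Ico]; omega
    · intro t ht hne
      rw [Finset.mem_Ico] at ht
      rw [if_neg]
      intro hA
      have := hA.le hw
      simp only [List.length_append, List.length_singleton] at this
      omega
  rw [e1, e2, e3]
  omega

lemma occ_snoc (hw : 1 ≤ w.length) (X : List (Fin b)) (a : Fin b) :
    occCount w (X ++ [a]) = occCount w X + (if w <:+ (X ++ [a]) then 1 else 0) := by
  by_cases hlen : w.length ≤ X.length + 1
  · rw [occCount_eq_oCnt, occCount_eq_oCnt]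
    have hXa : (X ++ [a]).length = X.length + 1 := by simp
    rw [hXa]
    rw [oCnt_snoc w hw X a (by omega)]
    congr 2
    rw [show X.length + 1 - w.length = (X ++ [a]).length - w.length by rw [hXa]]
    exact propext (oA_suffix (by rw [hXa]; omega))
  · push_neg at hlen
    have h0 : occCount w (X ++ [a]) = 0 := by
      rw [occCount_eq_oCnt]
      apply oCnt_eq_zero
      intro t _ _ hA
      have := hA.le hw
      simp only [List.length_append, List.length_singleton] at this
      omega
    have h1 : occCount w X = 0 := by
      rw [occCount_eq_oCnt]
      apply oCnt_eq_zero
      intro t _ _ hA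
      have := hA.le hw
      omega
    have h2 : ¬ (w <:+ (X ++ [a])) := by
      intro h
      have := h.length_le
      simp at this
      omega
    rw [h0, h1, if_neg h2]

lemma aft_snoc (hw : 1 ≤ w.length) (u : List (Fin b)) (a : Fin b) :
    oCnt w (w ++ (u ++ [a])) 1 (w.length + (u.length + 1)) =
      oCnt w (w ++ u) 1 (w.length + u.length) +
        (if w <:+ (w ++ u ++ [a]) then 1 else 0) := by
  have h1 : w ++ (u ++ [a]) = (w ++ u) ++ [a] := (List.append_assoc _ _ _).symm
  have h2 : (w ++ u).length = w.length + u.length := by simp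
  have key := oCnt_snoc w hw (w ++ u) a (s := 1) (by rw [h2]; omega)
  rw [h2] at key
  have h4 : ((w ++ u) ++ [a]).length = w.length + u.length + 1 := by
    simp only [List.length_append, List.length_singleton]
  have h5 : oA w ((w ++ u) ++ [a]) (w.length + u.length + 1 - w.length) ↔
      w <:+ ((w ++ u) ++ [a]) := by
    have h6 := oA_suffix (w := w) (X := (w ++ u) ++ [a]) (by rw [h4]; omega)
    rw [h4] at h6
    exact h6
  have harr : w.length + (u.length + 1) = w.length + u.length + 1 := by omega
  rw [h1, harr, key, if_congr h5 rfl rfl]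

/-- appending one letter: the two telescoping identities -/
lemma I1 (hb : 0 < b) (hw : 1 ≤ w.length) (l : ℕ) :
    zc w 0 (l + 1) + mm w (l + 1) = b * zc w 0 l := by
  unfold zc mm
  rw [cnt_succ hb, cnt_succ hb, ← Finset.sum_add_distrib]
  have : ∀ a : Fin b,
      cnt b l (fun u => occCount w (u ++ [a]) = 0) +
      cnt b l (fun u => occCount w (u ++ [a]) = 1 ∧ w <:+ (u ++ [a])) =
      cnt b l (fun X => occCount w X = 0) := by
    intro a
    rw [cnt_add (by rintro X ⟨h1, h2, _⟩; omega)]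
    apply cnt_congr
    intro X _
    rw [occ_snoc w hw X a]
    by_cases hs : w <:+ (X ++ [a]) <;> simp [hs] <;> omega
  rw [Finset.sum_congr rfl (fun a _ => this a)]
  simp [mul_comm]

lemma I1' (hb : 0 < b) (hw : 1 ≤ w.length) (l : ℕ) :
    yy w 0 (l + 1) + dd w (l + 1) = b * yy w 0 l := by
  unfold yy dd
  rw [cnt_succ hb, cnt_succ hb, ← Finset.sum_add_distrib]
  have : ∀ a : Fin b,
      cnt b l (fun u => oCnt w (w ++ (u ++ [a])) 1 (w.length + (u ++ [a]).length) = 0) +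
      cnt b l (fun u => oCnt w (w ++ (u ++ [a])) 1 (w.length + (u ++ [a]).length) = 1 ∧
        w <:+ (w ++ (u ++ [a]))) =
      cnt b l (fun u => oCnt w (w ++ u) 1 (w.length + u.length) = 0) := by
    intro a
    rw [cnt_add (by rintro X ⟨h1, h2, _⟩; omega)]
    apply cnt_congr
    intro u _
    have hlen : (u ++ [a]).length = u.length + 1 := by simp
    rw [hlen, aft_snoc w hw u a]
    by_cases hs : w <:+ (w ++ u ++ [a])
    · rw [if_pos hs]
      constructor
      · rintro (h | ⟨h1, _⟩) <;> omega
      · intro h; right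
        refine ⟨by omega, ?_⟩
        rw [← List.append_assoc]
        exact hs
    · rw [if_neg hs]
      constructor
      · rintro (h | ⟨h1, h2⟩)
        · omega
        · rw [List.append_assoc] at hs; exact absurd h2 hs
      · intro h; left; omega
  rw [Finset.sum_congr rfl (fun a _ => this a)]
  simp [mul_comm]

/- ## helpers for the decomposition bijections -/

lemma oCnt_single (w X : List (Fin b)) (t : ℕ) :
    oCnt w X t (t + 1) = if oA w X t then 1 else 0 := by
  unfold oCnt
  rw [Nat.Ico_succ_singleton, Finset.sum_singleton]

lemma oCnt_ge_two {w X : List (Fin b)} {a c t₁ t₂ : ℕ} (h1 : a ≤ t₁) (h2 : t₁ < t₂)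
    (h3 : t₂ < c) (o1 : oA w X t₁) (o2 : oA w X t₂) : 2 ≤ oCnt w X a c := by
  rw [oCnt_split w X (show a ≤ t₁ + 1 by omega) (show t₁ + 1 ≤ c by omega)]
  have p1 := oCnt_pos (a := a) (c := t₁ + 1) h1 (by omega) o1
  have p2 := oCnt_pos (a := t₁ + 1) (c := c) (by omega) h3 o2
  omega

lemma uniq_occ {w X : List (Fin b)} {a c q : ℕ} (hc : oCnt w X a c = 1) (h2 : a ≤ q)
    (h3 : q < c) (h4 : oA w X q) : ∀ t, a ≤ t → t < c → oA w X t → t = q := by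
  intro t ht1 ht2 ht3
  by_contra hne
  rcases Nat.lt_or_ge t q with h | h
  · have := oCnt_ge_two ht1 h h3 ht3 h4; omega
  · have hlt : q < t := by omega
    have := oCnt_ge_two h2 hlt ht2 h4 ht3; omega

lemma oCnt_first {w X : List (Fin b)} {a q : ℕ} (hq : a ≤ q) (hoA : oA w X q)
    (hmin : ∀ r, a ≤ r → r < q → ¬ oA w X r) : oCnt w X a (q + 1) = 1 := by
  rw [oCnt_split w X hq (show q ≤ q + 1 by omega), oCnt_single, if_pos hoA,
    oCnt_eq_zero hmin]

lemma drop_of_oA {w X : List (Fin b)} {q : ℕ} (h : oA w X q) :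
    X.drop q = w ++ X.drop (q + w.length) := by
  conv_lhs => rw [← List.take_append_drop w.length (X.drop q)]
  rw [h, List.drop_drop]

lemma suffix_drop_eq {w X : List (Fin b)} {q : ℕ} (h : w <:+ X)
    (hlen : X.length = q + w.length) : X.drop q = w := by
  rw [List.suffix_iff_eq_drop] at h
  have : X.length - w.length = q := by omega
  rw [this] at h
  exact h.symm

lemma exists_oA {w X : List (Fin b)} {a c : ℕ} (h : 0 < oCnt w X a c) :
    ∃ t, a ≤ t ∧ t < c ∧ oA w X t := by
  by_contra hcon
  push_neg at hcon
  rw [oCnt_eq_zero (fun t h1 h2 h3 => (hcon t h1 h2) h3)] at h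
  omega

lemma occ_small {w X : List (Fin b)} (hw : 1 ≤ w.length) (h : X.length < w.length) :
    occCount w X = 0 := by
  rw [occCount_eq_oCnt]
  exact oCnt_eq_zero (fun t _ _ hA => by have := hA.le hw; omega)

lemma mm_small {w : List (Fin b)} {l : ℕ} (h : l < w.length) : mm w l = 0 := by
  apply cnt_eq_zero
  rintro X hX ⟨-, hsfx⟩
  have := hsfx.length_le
  omega

lemma dd_zero (w : List (Fin b)) (hw : 1 ≤ w.length) : dd w 0 = 0 := by
  unfold dd
  rw [cnt_nil, if_neg]
  rintro ⟨h1, -⟩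
  rw [oCnt_eq_zero (fun t ht1 ht2 hA => by
    have h2 := hA.le hw
    simp only [List.length_append, List.length_nil] at h2 ht2
    omega)] at h1
  omega

/- ## the gap decomposition: `I6` -/

lemma fiber_DY (hw : 1 ≤ w.length) {j l t : ℕ} (htl : t ≤ l) (ht0 : 1 ≤ t) :
    cnt b l (fun u => oCnt w (w ++ u) 1 (w.length + u.length) = j + 1 ∧ fo w (w ++ u) 1 = t)
      = dd w t * yy w j (l - t) := by
  unfold dd yy cnt
  rw [← Finset.card_product]
  apply Finset.card_bij' (fun u _ => (u.take t, u.drop t)) (fun q _ => q.1 ++ q.2) ?hi ?hj ?li ?ri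
  case hi => -- forward membership
    intro u hu
    simp only [Finset.mem_filter, mem_Lists] at hu
    obtain ⟨hlen, hcnt, hfo⟩ := hu
    rw [hlen] at hcnt
    have hXlen : (w ++ u).length = w.length + l := by simp [hlen]
    have hspec := fo_spec (w := w) (X := w ++ u) (a := 1)
      (by rw [hXlen, hfo]; omega)
    rw [hfo] at hspec
    have hoA : oA w (w ++ u) t := hspec.2
    have hmin : ∀ r, 1 ≤ r → r < t → ¬ oA w (w ++ u) r := by
      intro r h1 h2 hA
      exact fo_min (by rw [hfo]; omega) ⟨h1, hA⟩
    have hone : oCnt w (w ++ u) 1 (t + 1) = 1 := oCnt_first hspec.1 hoA hmin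
    have hWV : w ++ u.take t = (w ++ u).take (w.length + t) := by
      rw [List.take_length_add_append]
    have hWZ : (w ++ u).drop t = w ++ u.drop t := by
      rw [drop_of_oA hoA]
      congr 1
      rw [Nat.add_comm t w.length, List.drop_length_add_append]
    have hvlen : (u.take t).length = t := by
      rw [List.length_take, hlen]; omega
    have hzlen : (u.drop t).length = l - t := by
      rw [List.length_drop, hlen]
    simp only [Finset.mem_product, Finset.mem_filter, mem_Lists]
    refine ⟨⟨hvlen, ?_, ?_⟩, hzlen, ?_⟩
    · -- D count
      rw [hvlen, hWV]
      have e1 : oCnt w ((w ++ u).take (w.length + t)) 1 (t + 1) = oCnt w (w ++ u) 1 (t + 1) :=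
        oCnt_congr (fun r h1 h2 => oA_take (by omega))
      have e2 : oCnt w ((w ++ u).take (w.length + t)) (t + 1) (w.length + t) = 0 := by
        apply oCnt_eq_zero
        intro r h1 h2 hA
        have h3 := hA.le hw
        rw [List.length_take] at h3
        omega
      rw [oCnt_split w ((w ++ u).take (w.length + t)) (show (1:ℕ) ≤ t + 1 by omega)
        (show t + 1 ≤ w.length + t by omega), e1, e2, hone]
    · -- D suffix
      rw [hWV]
      have hlt : ((w ++ u).take (w.length + t)).length = w.length + t := by
        rw [List.length_take]; omega
      have h5 := oA_suffix (w := w) (X := (w ++ u).take (w.length + t)) (by rw [hlt]; omega)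
      rw [hlt, show w.length + t - w.length = t by omega] at h5
      rw [← h5, oA_take (by omega)]
      exact hoA
    · -- Y count
      rw [hzlen, ← hWZ, oCnt_drop, show t + (w.length + (l - t)) = w.length + l by omega]
      have hsplit := oCnt_split w (w ++ u) (show (1:ℕ) ≤ t + 1 by omega)
        (show t + 1 ≤ w.length + l by omega)
      omega
  case hj => -- backward membership
    rintro ⟨v, z⟩ hq
    simp only [Finset.mem_product, Finset.mem_filter, mem_Lists] at hq
    obtain ⟨⟨hvlen, hD1, hD2⟩, hzlen, hY⟩ := hq
    simp only at hvlen hD1 hD2 hzlen hY ⊢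
    rw [hvlen] at hD1
    rw [hzlen] at hY
    have hwv : (w ++ v).length = w.length + t := by simp [hvlen]
    have hoAv : oA w (w ++ v) t := by
      have h5 := oA_suffix (w := w) (X := w ++ v) (by rw [hwv]; omega)
      rw [hwv, show w.length + t - w.length = t by omega] at h5
      exact h5.2 hD2
    have hulen : (v ++ z).length = l := by simp [hvlen, hzlen]; omega
    have hXeq : w ++ (v ++ z) = (w ++ v) ++ z := by rw [List.append_assoc]
    have hoAX : oA w ((w ++ v) ++ z) t :=
      (oA_append_left (by rw [hwv]; omega)).2 hoAv
    have huniq : ∀ r, 1 ≤ r → r < t → ¬ oA w ((w ++ v) ++ z) r := by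
      intro r h1 h2 hA
      rw [oA_append_left (by rw [hwv]; omega)] at hA
      have := uniq_occ hD1 ht0 (show t < w.length + t by omega) hoAv r h1 (by omega) hA
      omega
    have hdropX : ((w ++ v) ++ z).drop t = w ++ z := by
      rw [List.drop_append_of_le_length (by rw [hwv]; omega),
        suffix_drop_eq hD2 (by rw [hwv]; omega)]
    have hone : oCnt w ((w ++ v) ++ z) 1 (t + 1) = 1 := oCnt_first ht0 hoAX huniq
    simp only [Finset.mem_filter, mem_Lists]
    refine ⟨hulen, ?_, ?_⟩
    · rw [hulen, hXeq, oCnt_split w ((w ++ v) ++ z) (show (1:ℕ) ≤ t + 1 by omega)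
        (show t + 1 ≤ w.length + l by omega), hone]
      have e := oCnt_drop w ((w ++ v) ++ z) t 1 (w.length + (l - t))
      rw [hdropX, show t + (w.length + (l - t)) = w.length + l by omega] at e
      rw [e] at hY
      omega
    · rw [hXeq]
      exact fo_eq hw ht0 hoAX huniq
  case li =>
    intro u _
    exact List.take_append_drop t u
  case ri =>
    rintro ⟨v, z⟩ hq
    simp only [Finset.mem_product, Finset.mem_filter, mem_Lists] at hq
    obtain ⟨⟨hvlen, -⟩, -⟩ := hq
    simp only at hvlen ⊢
    rw [List.take_left' hvlen, List.drop_left' hvlen]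

lemma I6 (hw : 1 ≤ w.length) (j l : ℕ) :
    yy w (j + 1) l = ∑ x ∈ Finset.HasAntidiagonal.antidiagonal l, dd w x.1 * yy w j x.2 := by
  rw [yy, cnt_fiber (g := fun u => fo w (w ++ u) 1) (N := l + 1) ?bnd]
  case bnd =>
    intro u hu hP
    show fo w (w ++ u) 1 < l + 1
    have hXlen : (w ++ u).length = w.length + l := by simp [hu]
    obtain ⟨t', h1, h2, h3⟩ := exists_oA (show 0 < oCnt w (w ++ u) 1 (w.length + u.length)
      by rw [hP]; omega)
    have hle := fo_le_of h1 h3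
    have := h3.le hw
    omega
  rw [Finset.Nat.sum_antidiagonal_eq_sum_range_succ_mk]
  apply Finset.sum_congr rfl
  intro t ht
  rw [Finset.mem_range] at ht
  by_cases ht0 : 1 ≤ t
  · exact fiber_DY w hw (by omega) ht0
  · have ht0' : t = 0 := by omega
    subst ht0'
    rw [dd_zero w hw, zero_mul]
    apply cnt_eq_zero
    rintro u hu ⟨hcnt, hfo⟩
    have hXlen : (w ++ u).length = w.length + l := by simp [hu]
    have hspec := fo_spec (w := w) (X := w ++ u) (a := 1) (by rw [hfo, hXlen]; omega)
    rw [hfo] at hspec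
    omega

lemma fiber_MY (hw : 1 ≤ w.length) {k n t : ℕ} (htn : t + w.length ≤ n) :
    cnt b n (fun X => occCount w X = k + 1 ∧ fo w X 0 = t)
      = mm w (t + w.length) * yy w k (n - (t + w.length)) := by
  unfold mm yy cnt
  rw [← Finset.card_product]
  apply Finset.card_bij' (fun X _ => (X.take (t + w.length), X.drop (t + w.length)))
    (fun q _ => q.1 ++ q.2) ?hi ?hj ?li ?ri
  case hi =>
    intro X hX
    simp only [Finset.mem_filter, mem_Lists] at hX
    obtain ⟨hlen, hocc, hfo⟩ := hX
    rw [occCount_eq_oCnt, hlen] at hocc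
    have hspec := fo_spec (w := w) (X := X) (a := 0) (by rw [hfo]; omega)
    rw [hfo] at hspec
    have hoA : oA w X t := hspec.2
    have hmin : ∀ r, 0 ≤ r → r < t → ¬ oA w X r := by
      intro r _ h2 hA
      exact fo_min (by rw [hfo]; omega) ⟨Nat.zero_le r, hA⟩
    have hone : oCnt w X 0 (t + 1) = 1 := oCnt_first (Nat.zero_le t) hoA hmin
    have hvlen : (X.take (t + w.length)).length = t + w.length := by
      rw [List.length_take]; omega
    have hzlen : (X.drop (t + w.length)).length = n - (t + w.length) := by
      rw [List.length_drop, hlen]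
    have hWZ : X.drop t = w ++ X.drop (t + w.length) := drop_of_oA hoA
    simp only [Finset.mem_product, Finset.mem_filter, mem_Lists]
    refine ⟨⟨hvlen, ?_, ?_⟩, hzlen, ?_⟩
    · -- m-count
      rw [occCount_eq_oCnt, hvlen]
      have e1 : oCnt w (X.take (t + w.length)) 0 (t + 1) = oCnt w X 0 (t + 1) :=
        oCnt_congr (fun r h1 h2 => oA_take (by omega))
      have e2 : oCnt w (X.take (t + w.length)) (t + 1) (t + w.length) = 0 := by
        apply oCnt_eq_zero
        intro r h1 h2 hA
        have h3 := hA.le hw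
        rw [List.length_take] at h3
        omega
      rw [oCnt_split w (X.take (t + w.length)) (Nat.zero_le (t + 1))
        (show t + 1 ≤ t + w.length by omega), e1, e2, hone]
    · -- m-suffix
      have h5 := oA_suffix (w := w) (X := X.take (t + w.length)) (by rw [hvlen]; omega)
      rw [hvlen, show t + w.length - w.length = t by omega] at h5
      rw [← h5, oA_take (by omega)]
      exact hoA
    · -- Y count
      rw [hzlen, ← hWZ, oCnt_drop, show t + (w.length + (n - (t + w.length))) = n by omega]
      have hsplit := oCnt_split w X (Nat.zero_le (t + 1)) (show t + 1 ≤ n by omega)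
      omega
  case hj =>
    rintro ⟨m, z⟩ hq
    simp only [Finset.mem_product, Finset.mem_filter, mem_Lists] at hq
    obtain ⟨⟨hmlen, hocc1, hsfx⟩, hzlen, hY⟩ := hq
    simp only at hmlen hocc1 hsfx hzlen hY ⊢
    rw [occCount_eq_oCnt, hmlen] at hocc1
    rw [hzlen] at hY
    have hoAm : oA w m t := by
      have h5 := oA_suffix (w := w) (X := m) (by rw [hmlen]; omega)
      rw [hmlen, show t + w.length - w.length = t by omega] at h5
      exact h5.2 hsfx
    have hulen : (m ++ z).length = n := by simp [hmlen, hzlen]; omega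
    have hoAX : oA w (m ++ z) t := (oA_append_left (by omega)).2 hoAm
    have huniq : ∀ r, 0 ≤ r → r < t → ¬ oA w (m ++ z) r := by
      intro r _ h2 hA
      rw [oA_append_left (by omega)] at hA
      have := uniq_occ hocc1 (Nat.zero_le t) (show t < t + w.length by omega) hoAm r
        (Nat.zero_le r) (by omega) hA
      omega
    have hdropX : (m ++ z).drop t = w ++ z := by
      rw [List.drop_append_of_le_length (by omega),
        suffix_drop_eq hsfx (by omega)]
    have hone : oCnt w (m ++ z) 0 (t + 1) = 1 := oCnt_first (Nat.zero_le t) hoAX huniq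
    simp only [Finset.mem_filter, mem_Lists]
    refine ⟨hulen, ?_, ?_⟩
    · rw [occCount_eq_oCnt, hulen]
      have e := oCnt_drop w (m ++ z) t 1 (w.length + (n - (t + w.length)))
      rw [hdropX, show t + (w.length + (n - (t + w.length))) = n by omega] at e
      rw [e] at hY
      have hsplit := oCnt_split w (m ++ z) (Nat.zero_le (t + 1)) (show t + 1 ≤ n by omega)
      omega
    · exact fo_eq hw (Nat.zero_le t) hoAX huniq
  case li =>
    intro X _
    exact List.take_append_drop (t + w.length) X
  case ri =>
    rintro ⟨m, z⟩ hq
    simp only [Finset.mem_product, Finset.mem_filter, mem_Lists] at hq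
    obtain ⟨⟨hmlen, -⟩, -⟩ := hq
    simp only at hmlen ⊢
    rw [List.take_left' hmlen, List.drop_left' hmlen]

lemma sum_shift_p {p n : ℕ} (hp : p ≤ n) (g : ℕ → ℕ) (hsmall : ∀ α, α < p → g α = 0) :
    ∑ t ∈ Finset.range (n + 1), (if t + p ≤ n then g (t + p) else 0)
      = ∑ α ∈ Finset.range (n + 1), g α := by
  rw [Finset.range_eq_Ico,
    ← Finset.sum_Ico_consecutive _ (Nat.zero_le (n + 1 - p)) (show n + 1 - p ≤ n + 1 by omega),
    ← Finset.sum_Ico_consecutive g (Nat.zero_le p) (show p ≤ n + 1 by omega)]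
  have h1 : ∑ t ∈ Finset.Ico (n + 1 - p) (n + 1), (if t + p ≤ n then g (t + p) else 0) = 0 := by
    apply Finset.sum_eq_zero
    intro t ht
    rw [Finset.mem_Ico] at ht
    rw [if_neg (by omega)]
  have h2 : ∑ α ∈ Finset.Ico 0 p, g α = 0 := by
    apply Finset.sum_eq_zero
    intro α hα
    rw [Finset.mem_Ico] at hα
    exact hsmall α hα.2
  rw [h1, h2, add_zero, zero_add, Finset.sum_Ico_eq_sum_range, Finset.sum_Ico_eq_sum_range]
  rw [show n + 1 - p - 0 = n + 1 - p by omega]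
  apply Finset.sum_congr rfl
  intro i hi
  rw [Finset.mem_range] at hi
  rw [if_pos (by omega), show 0 + i + p = p + i by omega]

lemma I5 (hw : 1 ≤ w.length) (k n : ℕ) :
    zc w (k + 1) n = ∑ x ∈ Finset.HasAntidiagonal.antidiagonal n, mm w x.1 * yy w k x.2 := by
  by_cases hnp : w.length ≤ n
  · rw [zc, cnt_fiber (g := fun X => fo w X 0) (N := n + 1) ?bnd]
    case bnd =>
      intro X hX _
      show fo w X 0 < n + 1
      have := fo_le w X 0
      omega
    rw [Finset.Nat.sum_antidiagonal_eq_sum_range_succ_mk]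
    have key : ∀ t ∈ Finset.range (n + 1),
        cnt b n (fun X => occCount w X = k + 1 ∧ fo w X 0 = t)
          = if t + w.length ≤ n then mm w (t + w.length) * yy w k (n - (t + w.length)) else 0 := by
      intro t _
      by_cases h : t + w.length ≤ n
      · rw [if_pos h]
        exact fiber_MY w hw h
      · rw [if_neg h]
        apply cnt_eq_zero
        rintro X hX ⟨hocc, hfo⟩
        rw [occCount_eq_oCnt, hX] at hocc
        obtain ⟨t', h1, h2, h3⟩ := exists_oA (show 0 < oCnt w X 0 n by omega)
        have hle := fo_le_of h1 h3
        have hspec := fo_spec (w := w) (X := X) (a := 0) (by omega)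
        have := hspec.2.le hw
        rw [hfo] at this
        omega
    rw [Finset.sum_congr rfl key,
      sum_shift_p hnp (fun α => mm w α * yy w k (n - α)) (fun α hα => by
        show mm w α * yy w k (n - α) = 0
        rw [mm_small hα, zero_mul])]
  · push_neg at hnp
    have hL : zc w (k + 1) n = 0 := by
      apply cnt_eq_zero
      intro X hX hocc
      rw [occ_small hw (by omega)] at hocc
      omega
    rw [hL]
    symm
    apply Finset.sum_eq_zero
    intro x hx
    rw [Finset.HasAntidiagonal.mem_antidiagonal] at hx
    rw [mm_small (show x.1 < w.length by omega), zero_mul]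

lemma oA_drop_eq {w s : List (Fin b)} {n : ℕ} (hlen : s.length = n + w.length)
    (h : oA w s n) : s.drop n = w := by
  rw [oA] at h
  rwa [List.take_of_length_le (by rw [List.length_drop]; omega)] at h

lemma period_extract (hw : 1 ≤ w.length) {s : List (Fin b)} {t n : ℕ} (htn : t ≤ n)
    (hnt : n < t + w.length) (hoAt : oA w s t) (hdropn : s.drop n = w) :
    w.take (w.length - (n - t)) = w.drop (n - t) := by
  have h1 : s.drop t = w ++ s.drop (t + w.length) := drop_of_oA hoAt
  have h2 : w = w.drop (n - t) ++ s.drop (t + w.length) := by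
    have e : s.drop n = (s.drop t).drop (n - t) := by
      rw [List.drop_drop, show t + (n - t) = n by omega]
    rw [hdropn, h1] at e
    calc w = ((w ++ s.drop (t + w.length)).drop (n - t)) := e
    _ = w.drop (n - t) ++ s.drop (t + w.length) :=
        List.drop_append_of_le_length (by omega)
  have h4 : (w.drop (n - t)).take (w.length - (n - t)) = w.drop (n - t) :=
    List.take_of_length_le (by rw [List.length_drop])
  have h3 := congrArg (List.take (w.length - (n - t))) h2
  rw [List.take_append_of_le_length (by rw [List.length_drop]), h4] at h3
  exact h3

/-- the gluing identity used in `I2`. -/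
lemma key_glue (hw : 1 ≤ w.length) {t l : ℕ} {m : List (Fin b)}
    (hmlen : m.length = t + w.length) (hsfx : w <:+ m) (htl : t ≤ l) (hlt : l < t + w.length)
    (hper : w.take (w.length - (l - t)) = w.drop (l - t)) :
    m.take l ++ w = m ++ w.drop (w.length - (l - t)) := by
  have e1 : (m ++ w.drop (w.length - (l - t))).take l = m.take l := by
    rw [List.take_append_of_le_length (by omega)]
  have e2 : (m ++ w.drop (w.length - (l - t))).drop l = w := by
    rw [List.drop_append_of_le_length (by omega)]
    have h4 : m.drop l = w.drop (l - t) := by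
      have e : m.drop l = (m.drop t).drop (l - t) := by
        rw [List.drop_drop, show t + (l - t) = l by omega]
      rw [e, suffix_drop_eq hsfx (by omega)]
    rw [h4, ← hper, List.take_append_drop]
  conv_rhs => rw [← List.take_append_drop l (m ++ w.drop (w.length - (l - t)))]
  rw [e1, e2]

lemma fiber_M (hw : 1 ≤ w.length) {l t : ℕ} (htl : t ≤ l) :
    cnt b l (fun u => occCount w u = 0 ∧ fo w (u ++ w) 0 = t)
      = mm w (t + w.length) * cc w (l - t) := by
  -- facts available for any member of the fiber
  have fwd : ∀ u : List (Fin b), u.length = l → occCount w u = 0 → fo w (u ++ w) 0 = t →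
      oA w (u ++ w) t ∧ l < t + w.length ∧ (∀ r, r < t → ¬ oA w (u ++ w) r) ∧
        w.take (w.length - (l - t)) = w.drop (l - t) := by
    intro u hlen hfree hfo
    have hslen : (u ++ w).length = l + w.length := by simp [hlen]
    have hfreeo : oCnt w u 0 l = 0 := by rw [← hlen, ← occCount_eq_oCnt]; exact hfree
    have hspec := fo_spec (w := w) (X := u ++ w) (a := 0) (by rw [hfo, hslen]; omega)
    rw [hfo] at hspec
    have hoAt : oA w (u ++ w) t := hspec.2
    have hmin : ∀ r, r < t → ¬ oA w (u ++ w) r := by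
      intro r h2 hA
      exact fo_min (by rw [hfo]; omega) ⟨Nat.zero_le r, hA⟩
    have hdropl : (u ++ w).drop l = w := List.drop_left' hlen
    have hlt : l < t + w.length := by
      by_contra hcon
      push_neg at hcon
      have : oA w u t := (oA_append_left (by omega)).1 hoAt
      have := oCnt_pos (a := 0) (c := l) (Nat.zero_le t) (by omega) this
      omega
    exact ⟨hoAt, hlt, hmin, period_extract w hw htl hlt hoAt hdropl⟩
  by_cases hcc : (l - t < w.length ∧ w.take (w.length - (l - t)) = w.drop (l - t))
  · -- the period is compatible : fiber ≃ M-strings of length t + w.length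
    rw [show cc w (l - t) = 1 by rw [cc, if_pos hcc], mul_one]
    unfold mm cnt
    apply Finset.card_bij' (fun u _ => (u ++ w).take (t + w.length)) (fun m _ => m.take l)
      ?hi ?hj ?li ?ri
    case hi =>
      intro u hu
      simp only [Finset.mem_filter, mem_Lists] at hu
      obtain ⟨hlen, hfree, hfo⟩ := hu
      obtain ⟨hoAt, hlt, hmin, hper⟩ := fwd u hlen hfree hfo
      have hslen : (u ++ w).length = l + w.length := by simp [hlen]
      have hvlen : ((u ++ w).take (t + w.length)).length = t + w.length := by
        rw [List.length_take]; omega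
      simp only [Finset.mem_filter, mem_Lists]
      refine ⟨hvlen, ?_, ?_⟩
      · rw [occCount_eq_oCnt, hvlen]
        have hone : oCnt w (u ++ w) 0 (t + 1) = 1 :=
          oCnt_first (Nat.zero_le t) hoAt (fun r _ h2 => hmin r h2)
        have e1 : oCnt w ((u ++ w).take (t + w.length)) 0 (t + 1) = oCnt w (u ++ w) 0 (t + 1) :=
          oCnt_congr (fun r h1 h2 => oA_take (by omega))
        have e2 : oCnt w ((u ++ w).take (t + w.length)) (t + 1) (t + w.length) = 0 := by
          apply oCnt_eq_zero
          intro r h1 h2 hA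
          have h3 := hA.le hw
          rw [List.length_take] at h3
          omega
        rw [oCnt_split w ((u ++ w).take (t + w.length)) (Nat.zero_le (t + 1))
          (show t + 1 ≤ t + w.length by omega), e1, e2, hone]
      · have h5 := oA_suffix (w := w) (X := (u ++ w).take (t + w.length)) (by rw [hvlen]; omega)
        rw [hvlen, show t + w.length - w.length = t by omega] at h5
        rw [← h5, oA_take (by omega)]
        exact hoAt
    case hj =>
      intro m hm
      simp only [Finset.mem_filter, mem_Lists] at hm
      obtain ⟨hmlen, hocc1, hsfx⟩ := hm
      rw [occCount_eq_oCnt, hmlen] at hocc1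
      have hoAm : oA w m t := by
        have h5 := oA_suffix (w := w) (X := m) (by rw [hmlen]; omega)
        rw [hmlen, show t + w.length - w.length = t by omega] at h5
        exact h5.2 hsfx
      have hulen : (m.take l).length = l := by rw [List.length_take]; omega
      have hkey : m.take l ++ w = m ++ w.drop (w.length - (l - t)) :=
        key_glue w hw hmlen hsfx htl (by omega) hcc.2
      have huniq : ∀ r, r < t → ¬ oA w (m.take l ++ w) r := by
        intro r h2 hA
        rw [hkey, oA_append_left (by omega)] at hA
        have := uniq_occ hocc1 (Nat.zero_le t) (by omega) hoAm r (Nat.zero_le r) (by omega) hA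
        omega
      have hoAX : oA w (m.take l ++ w) t := by
        rw [hkey, oA_append_left (by omega)]
        exact hoAm
      simp only [Finset.mem_filter, mem_Lists]
      refine ⟨hulen, ?_, ?_⟩
      · rw [occCount_eq_oCnt, hulen]
        apply oCnt_eq_zero
        intro r _ h2 hA
        have h3 := hA.le hw
        rw [hulen] at h3
        have hA' : oA w (m.take l ++ w) r := (oA_append_left (by rw [hulen]; omega)).2 hA
        rw [hkey, oA_append_left (by omega)] at hA'
        have := uniq_occ hocc1 (Nat.zero_le t) (by omega) hoAm r (Nat.zero_le r) (by omega) hA'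
        omega
      · exact fo_eq hw (Nat.zero_le t) hoAX (fun r _ h2 => huniq r h2)
    case li =>
      intro u hu
      simp only [Finset.mem_filter, mem_Lists] at hu
      show ((u ++ w).take (t + w.length)).take l = u
      rw [List.take_take, show min l (t + w.length) = l by omega, List.take_left' hu.1]
    case ri =>
      intro m hm
      simp only [Finset.mem_filter, mem_Lists] at hm
      obtain ⟨hmlen, hocc1, hsfx⟩ := hm
      have hkey : m.take l ++ w = m ++ w.drop (w.length - (l - t)) :=
        key_glue w hw hmlen hsfx htl (by omega) hcc.2
      show (m.take l ++ w).take (t + w.length) = m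
      rw [hkey, List.take_left' hmlen]
  · -- incompatible period : the fiber is empty
    rw [show cc w (l - t) = 0 by rw [cc, if_neg hcc], mul_zero]
    apply cnt_eq_zero
    rintro u hu ⟨hfree, hfo⟩
    obtain ⟨hoAt, hlt, hmin, hper⟩ := fwd u hu hfree hfo
    exact hcc ⟨by omega, hper⟩

lemma I2 (hw : 1 ≤ w.length) (l : ℕ) :
    zc w 0 l = ∑ x ∈ Finset.HasAntidiagonal.antidiagonal (l + w.length), mm w x.1 * cc w x.2 := by
  rw [zc, cnt_fiber (g := fun u => fo w (u ++ w) 0) (N := l + w.length + 1) ?bnd]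
  case bnd =>
    intro u hu _
    show fo w (u ++ w) 0 < l + w.length + 1
    have := fo_le w (u ++ w) 0
    have : (u ++ w).length = l + w.length := by simp [hu]
    omega
  rw [Finset.Nat.sum_antidiagonal_eq_sum_range_succ_mk,
    ← sum_shift_p (show w.length ≤ l + w.length by omega)
      (fun α => mm w α * cc w (l + w.length - α))
      (fun α hα => by
        show mm w α * cc w (l + w.length - α) = 0
        rw [mm_small hα, zero_mul])]
  apply Finset.sum_congr rfl
  intro t ht
  rw [Finset.mem_range] at ht
  by_cases htl : t ≤ l
  · rw [if_pos (by omega)]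
    have := fiber_M w hw htl
    rw [this, show l + w.length - (t + w.length) = l - t by omega]
  · rw [if_neg (by omega)]
    apply cnt_eq_zero
    rintro u hu ⟨hfree, hfo⟩
    have hslen : (u ++ w).length = l + w.length := by simp [hu]
    have hoAl : oA w (u ++ w) l := by
      rw [oA, List.drop_left' hu, List.take_length]
    have := fo_le_of (Nat.zero_le l) hoAl
    omega

lemma I4a (hw : 1 ≤ w.length) {n : ℕ} (hn : n < w.length) : ss w n = cc w n := by
  rw [ss, cc]
  by_cases hper : w.take (w.length - n) = w.drop n
  · rw [if_pos ⟨hn, hper⟩]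
    have hmem : (w.take n ++ w) ∈ (Lists b (w.length + n)).filter
        (fun s => s.take w.length = w ∧ oA w s n ∧ oCnt w s 1 (n + 1 - w.length) = 0) := by
      have htn : (w.take n).length = n := by rw [List.length_take]; omega
      simp only [Finset.mem_filter, mem_Lists]
      refine ⟨by simp [htn]; omega, ?_, ?_, ?_⟩
      · have e := List.take_length_add_append (l₁ := w.take n) (l₂ := w) (w.length - n)
        rw [htn, show n + (w.length - n) = w.length by omega] at e
        rw [e, hper, List.take_append_drop]
      · rw [oA, List.drop_left' htn, List.take_length]
      · apply oCnt_eq_zero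
        intro r h1 h2 _
        omega
    have huniq : ∀ X ∈ (Lists b (w.length + n)).filter
        (fun s => s.take w.length = w ∧ oA w s n ∧ oCnt w s 1 (n + 1 - w.length) = 0),
        X = w.take n ++ w := by
      intro X hX
      simp only [Finset.mem_filter, mem_Lists] at hX
      obtain ⟨hlen, h1, h2, -⟩ := hX
      have hdn : X.drop n = w := oA_drop_eq (by omega) h2
      have htn : X.take n = w.take n := by
        rw [← h1, List.take_take, min_eq_left (by omega)]
      rw [← List.take_append_drop n X, hdn, htn]
    rw [cnt, Finset.eq_singleton_iff_unique_mem.mpr ⟨hmem, huniq⟩, Finset.card_singleton]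
  · rw [if_neg (by tauto)]
    apply cnt_eq_zero
    rintro X hlen ⟨h1, h2, -⟩
    have hdn : X.drop n = w := oA_drop_eq (by omega) h2
    have hoA0 : oA w X 0 := by rw [oA, List.drop_zero]; exact h1
    have := period_extract w hw (Nat.zero_le n) (by omega) hoA0 hdn
    rw [Nat.sub_zero] at this
    exact hper this

lemma I4b (hw : 1 ≤ w.length) {n : ℕ} (hn : w.length ≤ n) : ss w n = yy w 0 (n - w.length) := by
  unfold ss yy cnt
  apply Finset.card_bij' (fun s _ => (s.take n).drop w.length) (fun u _ => (w ++ u) ++ w)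
    ?hi ?hj ?li ?ri
  case hi =>
    intro s hs
    simp only [Finset.mem_filter, mem_Lists] at hs
    obtain ⟨hlen, h1, h2, h3⟩ := hs
    have hdn : s.drop n = w := oA_drop_eq (by omega) h2
    have hstake : s.take n = w ++ (s.take n).drop w.length := by
      conv_lhs => rw [← List.take_append_drop w.length (s.take n)]
      rw [List.take_take, min_eq_left hn, h1]
    have hulen : ((s.take n).drop w.length).length = n - w.length := by
      rw [List.length_drop, List.length_take]; omega
    simp only [Finset.mem_filter, mem_Lists]
    refine ⟨hulen, ?_⟩
    rw [hulen, ← hstake, show w.length + (n - w.length) = n by omega]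
    apply oCnt_eq_zero
    intro r h4 h5 hA
    have h6 := hA.le hw
    rw [List.length_take] at h6
    rw [oA_take (by omega)] at hA
    have := oCnt_pos (a := 1) (c := n + 1 - w.length) h4 (by omega) hA
    omega
  case hj =>
    intro u hu
    simp only [Finset.mem_filter, mem_Lists] at hu
    obtain ⟨hulen, hu0⟩ := hu
    rw [hulen] at hu0
    have hwu : (w ++ u).length = n := by simp [hulen]; omega
    simp only [Finset.mem_filter, mem_Lists]
    refine ⟨by simp [hulen]; omega, ?_, ?_, ?_⟩
    · rw [List.take_append_of_le_length (by omega), List.take_left' rfl]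
    · rw [oA, List.drop_left' hwu, List.take_length]
    · apply oCnt_eq_zero
      intro r h4 h5 hA
      rw [oA_append_left (by omega)] at hA
      have := oCnt_pos (a := 1) (c := w.length + (n - w.length)) h4 (by omega) hA
      omega
  case li =>
    intro s hs
    simp only [Finset.mem_filter, mem_Lists] at hs
    obtain ⟨hlen, h1, h2, -⟩ := hs
    have hdn : s.drop n = w := oA_drop_eq (by omega) h2
    have hstake : s.take n = w ++ (s.take n).drop w.length := by
      conv_lhs => rw [← List.take_append_drop w.length (s.take n)]
      rw [List.take_take, min_eq_left hn, h1]
    show (w ++ (s.take n).drop w.length) ++ w = s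
    rw [← hstake, ← hdn, List.take_append_drop]
  case ri =>
    intro u hu
    simp only [Finset.mem_filter, mem_Lists] at hu
    have hwu : (w ++ u).length = n := by simp [hu.1]; omega
    show (((w ++ u) ++ w).take n).drop w.length = u
    rw [List.take_left' hwu, List.drop_left' rfl]

lemma fiber_D (hw : 1 ≤ w.length) {n t : ℕ} (ht0 : 1 ≤ t) (htn : t ≤ n) :
    cnt b (w.length + n) (fun s => (s.take w.length = w ∧ oA w s n ∧
        oCnt w s 1 (n + 1 - w.length) = 0) ∧ fo w s 1 = t)
      = dd w t * cc w (n - t) := by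
  have fwd : ∀ s : List (Fin b), s.length = w.length + n →
      (s.take w.length = w ∧ oA w s n ∧ oCnt w s 1 (n + 1 - w.length) = 0) → fo w s 1 = t →
      oA w s t ∧ n < t + w.length ∧ (∀ r, 1 ≤ r → r < t → ¬ oA w s r) ∧
        w.take (w.length - (n - t)) = w.drop (n - t) := by
    rintro s hlen ⟨h1, h2, h3⟩ hfo
    have hspec := fo_spec (w := w) (X := s) (a := 1) (by rw [hfo, hlen]; omega)
    rw [hfo] at hspec
    have hoAt : oA w s t := hspec.2
    have hmin : ∀ r, 1 ≤ r → r < t → ¬ oA w s r := by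
      intro r h4 h5 hA
      exact fo_min (by rw [hfo]; omega) ⟨h4, hA⟩
    have hdn : s.drop n = w := oA_drop_eq (by omega) h2
    have hnt : n < t + w.length := by
      by_contra hcon
      push_neg at hcon
      have := oCnt_pos (a := 1) (c := n + 1 - w.length) ht0 (by omega) hoAt
      omega
    exact ⟨hoAt, hnt, hmin, period_extract w hw htn hnt hoAt hdn⟩
  by_cases hcc : (n - t < w.length ∧ w.take (w.length - (n - t)) = w.drop (n - t))
  · rw [show cc w (n - t) = 1 by rw [cc, if_pos hcc], mul_one]
    unfold dd cnt
    apply Finset.card_bij' (fun s _ => (s.take (w.length + t)).drop w.length)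
      (fun v _ => (w ++ v) ++ w.drop (w.length - (n - t))) ?hi ?hj ?li ?ri
    case hi =>
      intro s hs
      simp only [Finset.mem_filter, mem_Lists] at hs
      obtain ⟨hlen, hP, hfo⟩ := hs
      obtain ⟨hoAt, hnt, hmin, hper⟩ := fwd s hlen hP hfo
      have hsplit : s.take (w.length + t) = w ++ (s.take (w.length + t)).drop w.length := by
        conv_lhs => rw [← List.take_append_drop w.length (s.take (w.length + t))]
        rw [List.take_take, min_eq_left (by omega), hP.1]
      have hvlen : ((s.take (w.length + t)).drop w.length).length = t := by
        rw [List.length_drop, List.length_take]; omega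
      have hone : oCnt w s 1 (t + 1) = 1 := oCnt_first ht0 hoAt hmin
      simp only [Finset.mem_filter, mem_Lists]
      refine ⟨hvlen, ?_, ?_⟩
      · rw [hvlen, ← hsplit]
        have e1 : oCnt w (s.take (w.length + t)) 1 (t + 1) = oCnt w s 1 (t + 1) :=
          oCnt_congr (fun r h1 h2 => oA_take (by omega))
        have e2 : oCnt w (s.take (w.length + t)) (t + 1) (w.length + t) = 0 := by
          apply oCnt_eq_zero
          intro r h1 h2 hA
          have h3 := hA.le hw
          rw [List.length_take] at h3
          omega
        rw [oCnt_split w (s.take (w.length + t)) (show (1:ℕ) ≤ t + 1 by omega)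
          (show t + 1 ≤ w.length + t by omega), e1, e2, hone]
      · rw [← hsplit]
        have hlt : (s.take (w.length + t)).length = w.length + t := by
          rw [List.length_take]; omega
        have h5 := oA_suffix (w := w) (X := s.take (w.length + t)) (by rw [hlt]; omega)
        rw [hlt, show w.length + t - w.length = t by omega] at h5
        rw [← h5, oA_take (by omega)]
        exact hoAt
    case hj =>
      intro v hv
      simp only [Finset.mem_filter, mem_Lists] at hv
      obtain ⟨hvlen, hD1, hD2⟩ := hv
      rw [hvlen] at hD1
      have hwv : (w ++ v).length = w.length + t := by simp [hvlen]
      have hoAv : oA w (w ++ v) t := by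
        have h5 := oA_suffix (w := w) (X := w ++ v) (by rw [hwv]; omega)
        rw [hwv, show w.length + t - w.length = t by omega] at h5
        exact h5.2 hD2
      have hslen : ((w ++ v) ++ w.drop (w.length - (n - t))).length = w.length + n := by
        rw [List.length_append, hwv, List.length_drop]; omega
      have hdropn : ((w ++ v) ++ w.drop (w.length - (n - t))).drop n = w := by
        rw [List.drop_append_of_le_length (by omega)]
        have e : (w ++ v).drop n = w.drop (n - t) := by
          have e2 : (w ++ v).drop n = ((w ++ v).drop t).drop (n - t) := by
            rw [List.drop_drop, show t + (n - t) = n by omega]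
          rw [e2, suffix_drop_eq hD2 (by omega)]
        rw [e, ← hcc.2, List.take_append_drop]
      have hoAX : oA w ((w ++ v) ++ w.drop (w.length - (n - t))) t :=
        (oA_append_left (by omega)).2 hoAv
      have huniq : ∀ r, 1 ≤ r → r < t →
          ¬ oA w ((w ++ v) ++ w.drop (w.length - (n - t))) r := by
        intro r h4 h5 hA
        rw [oA_append_left (by omega)] at hA
        have := uniq_occ hD1 ht0 (show t < w.length + t by omega) hoAv r h4 (by omega) hA
        omega
      simp only [Finset.mem_filter, mem_Lists]
      refine ⟨hslen, ⟨?_, ?_, ?_⟩, ?_⟩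
      · rw [List.take_append_of_le_length (by omega), List.take_left' rfl]
      · rw [oA, hdropn, List.take_length]
      · apply oCnt_eq_zero
        intro r h4 h5 hA
        rw [oA_append_left (by omega)] at hA
        have := uniq_occ hD1 ht0 (show t < w.length + t by omega) hoAv r h4 (by omega) hA
        omega
      · exact fo_eq hw ht0 hoAX huniq
    case li =>
      intro s hs
      simp only [Finset.mem_filter, mem_Lists] at hs
      obtain ⟨hlen, hP, hfo⟩ := hs
      obtain ⟨hoAt, hnt, hmin, hper⟩ := fwd s hlen hP hfo
      have hdn : s.drop n = w := oA_drop_eq (by omega) hP.2.1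
      have hsplit : s.take (w.length + t) = w ++ (s.take (w.length + t)).drop w.length := by
        conv_lhs => rw [← List.take_append_drop w.length (s.take (w.length + t))]
        rw [List.take_take, min_eq_left (by omega), hP.1]
      show (w ++ (s.take (w.length + t)).drop w.length) ++ w.drop (w.length - (n - t)) = s
      rw [← hsplit]
      have e : s.drop (w.length + t) = w.drop (w.length - (n - t)) := by
        have e2 : s.drop (w.length + t) = (s.drop n).drop (w.length + t - n) := by
          rw [List.drop_drop, show n + (w.length + t - n) = w.length + t by omega]
        rw [e2, hdn, show w.length + t - n = w.length - (n - t) by omega]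
      rw [← e, List.take_append_drop]
    case ri =>
      intro v hv
      simp only [Finset.mem_filter, mem_Lists] at hv
      obtain ⟨hvlen, -⟩ := hv
      have hwv : (w ++ v).length = w.length + t := by simp [hvlen]
      show ((((w ++ v) ++ w.drop (w.length - (n - t))).take (w.length + t)).drop w.length) = v
      rw [List.take_left' hwv, List.drop_left' rfl]
  · rw [show cc w (n - t) = 0 by rw [cc, if_neg hcc], mul_zero]
    apply cnt_eq_zero
    rintro s hlen ⟨hP, hfo⟩
    obtain ⟨-, hnt, -, hper⟩ := fwd s hlen hP hfo
    exact hcc ⟨by omega, hper⟩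

lemma I4c (hw : 1 ≤ w.length) {n : ℕ} (hn : 1 ≤ n) :
    ss w n = ∑ x ∈ Finset.HasAntidiagonal.antidiagonal n, dd w x.1 * cc w x.2 := by
  rw [ss, cnt_fiber (g := fun s => fo w s 1) (N := n + 1) ?bnd]
  case bnd =>
    rintro s hs ⟨-, h2, -⟩
    show fo w s 1 < n + 1
    have := fo_le_of hn h2
    omega
  rw [Finset.Nat.sum_antidiagonal_eq_sum_range_succ_mk]
  apply Finset.sum_congr rfl
  intro t ht
  rw [Finset.mem_range] at ht
  by_cases ht0 : 1 ≤ t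
  · exact fiber_D w hw ht0 (by omega)
  · have ht0' : t = 0 := by omega
    subst ht0'
    rw [dd_zero w hw, zero_mul]
    apply cnt_eq_zero
    rintro s hs ⟨-, hfo⟩
    have hspec := fo_spec (w := w) (X := s) (a := 1) (by rw [hfo, hs]; omega)
    rw [hfo] at hspec
    omega

/- ## base values -/

lemma zc_zero_zero : zc w 0 0 = 1 := by
  rw [zc, cnt_nil, if_pos]
  rfl

lemma mm_zero : mm w 0 = 0 := by
  rw [mm, cnt_nil, if_neg]
  rintro ⟨h, -⟩
  simp [occCount] at h

lemma yy_zero_zero (hw : 1 ≤ w.length) : yy w 0 0 = 1 := by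
  rw [yy, cnt_nil, if_pos]
  apply oCnt_eq_zero
  intro t h1 h2 hA
  have := hA.le hw
  simp only [List.length_append, List.length_nil] at this h2
  omega

lemma cc_zero (hw : 1 ≤ w.length) : cc w 0 = 1 := by
  rw [cc, if_pos ⟨hw, by rw [Nat.sub_zero, List.take_length, List.drop_zero]⟩]

lemma ss_zero (hw : 1 ≤ w.length) : ss w 0 = 1 := by
  rw [I4a w hw (by omega), cc_zero w hw]

/- ## the power series -/

noncomputable def Ns : PowerSeries ℚ := PowerSeries.mk fun l => (zc w 0 l : ℚ)
noncomputable def Ms : PowerSeries ℚ := PowerSeries.mk fun l => (mm w l : ℚ)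
noncomputable def Ys (j : ℕ) : PowerSeries ℚ := PowerSeries.mk fun l => (yy w j l : ℚ)
noncomputable def Ds : PowerSeries ℚ := PowerSeries.mk fun l => (dd w l : ℚ)
noncomputable def Ss : PowerSeries ℚ := PowerSeries.mk fun n => (ss w n : ℚ)

lemma coeff_Aw (hb : b ≠ 0) (i : ℕ) : (PowerSeries.coeff i) (Aw b w) = (cc w i : ℚ) := by
  rw [Aw, map_sum, cc]
  by_cases hi : i < w.length
  · rw [Finset.sum_eq_single_of_mem i (Finset.mem_range.2 hi)]
    · by_cases hc : w.take (w.length - i) = w.drop i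
      · rw [if_pos hc, if_pos ⟨hi, hc⟩, PowerSeries.coeff_X_pow, if_pos rfl]
        norm_num
      · rw [if_neg hc, if_neg (by tauto), map_zero]
        norm_num
    · intro j _ hne
      by_cases hc : w.take (w.length - j) = w.drop j
      · rw [if_pos hc, PowerSeries.coeff_X_pow, if_neg (by omega)]
      · rw [if_neg hc, map_zero]
  · rw [Finset.sum_eq_zero, if_neg (by tauto)]
    · norm_num
    · intro j hj
      rw [Finset.mem_range] at hj
      by_cases hc : w.take (w.length - j) = w.drop j
      · rw [if_pos hc, PowerSeries.coeff_X_pow, if_neg (by omega)]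
      · rw [if_neg hc, map_zero]

lemma coeff_CX_mul (φ : PowerSeries ℚ) (a : ℚ) (n : ℕ) :
    (PowerSeries.coeff n) ((PowerSeries.C a * X) * φ) =
      if n = 0 then 0 else a * (PowerSeries.coeff (n - 1)) φ := by
  rw [show (PowerSeries.C a * X) * φ = PowerSeries.C a * (φ * X) by ring,
    PowerSeries.coeff_C_mul]
  cases n with
  | zero => rw [PowerSeries.coeff_zero_mul_X, if_pos rfl, mul_zero]
  | succ m => rw [PowerSeries.coeff_succ_mul_X, if_neg (by omega), Nat.add_sub_cancel]

lemma E1 (hb : 0 < b) (hw : 1 ≤ w.length) :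
    (1 - PowerSeries.C (b : ℚ) * X) * Ns w = 1 - Ms w := by
  apply PowerSeries.ext
  intro n
  rw [sub_mul, one_mul, map_sub, map_sub, coeff_CX_mul, PowerSeries.coeff_one]
  simp only [Ns, Ms, PowerSeries.coeff_mk]
  cases n with
  | zero =>
    rw [if_pos rfl, if_pos rfl, zc_zero_zero, mm_zero]
    norm_num
  | succ m =>
    rw [if_neg (by omega), if_neg (by omega), Nat.add_sub_cancel]
    have h := I1 w hb hw m
    have hcast : ((zc w 0 (m + 1) : ℚ) + (mm w (m + 1) : ℚ)) = (b : ℚ) * (zc w 0 m : ℚ) := by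
      exact_mod_cast h
    linarith [hcast]

lemma E3 (hb : 0 < b) (hw : 1 ≤ w.length) :
    (1 - PowerSeries.C (b : ℚ) * X) * Ys w 0 = 1 - Ds w := by
  apply PowerSeries.ext
  intro n
  rw [sub_mul, one_mul, map_sub, map_sub, coeff_CX_mul, PowerSeries.coeff_one]
  simp only [Ys, Ds, PowerSeries.coeff_mk]
  cases n with
  | zero =>
    rw [if_pos rfl, if_pos rfl, yy_zero_zero w hw, dd_zero w hw]
    norm_num
  | succ m =>
    rw [if_neg (by omega), if_neg (by omega), Nat.add_sub_cancel]
    have h := I1' w hb hw m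
    have hcast : ((yy w 0 (m + 1) : ℚ) + (dd w (m + 1) : ℚ)) = (b : ℚ) * (yy w 0 m : ℚ) := by
      exact_mod_cast h
    linarith [hcast]

lemma E2 (hb : b ≠ 0) (hw : 1 ≤ w.length) :
    X ^ w.length * Ns w = Ms w * Aw b w := by
  apply PowerSeries.ext
  intro n
  have hXp : (PowerSeries.coeff n) (X ^ w.length * Ns w)
      = if w.length ≤ n then (zc w 0 (n - w.length) : ℚ) else 0 := by
    rw [PowerSeries.coeff_mul, Finset.Nat.sum_antidiagonal_eq_sum_range_succ_mk]
    by_cases h : w.length ≤ n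
    · rw [if_pos h, Finset.sum_eq_single_of_mem w.length (Finset.mem_range.2 (by omega))]
      · rw [PowerSeries.coeff_X_pow, if_pos rfl, one_mul, Ns, PowerSeries.coeff_mk]
      · intro j _ hne
        rw [PowerSeries.coeff_X_pow, if_neg (by omega), zero_mul]
    · rw [if_neg h]
      apply Finset.sum_eq_zero
      intro j hj
      rw [Finset.mem_range] at hj
      rw [PowerSeries.coeff_X_pow, if_neg (by omega), zero_mul]
  rw [hXp, PowerSeries.coeff_mul]
  have hI2 : ∀ x ∈ Finset.HasAntidiagonal.antidiagonal n,
      (PowerSeries.coeff x.1) (Ms w) * (PowerSeries.coeff x.2) (Aw b w)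
        = ((mm w x.1 * cc w x.2 : ℕ) : ℚ) := by
    intro x _
    rw [Ms, PowerSeries.coeff_mk, coeff_Aw w hb]
    push_cast
    ring
  rw [Finset.sum_congr rfl hI2, ← Nat.cast_sum]
  by_cases h : w.length ≤ n
  · rw [if_pos h]
    have := I2 w hw (n - w.length)
    rw [show n - w.length + w.length = n by omega] at this
    rw [← this]
  · rw [if_neg h]
    symm
    norm_num
    apply Finset.sum_eq_zero
    intro x hx
    rw [Finset.HasAntidiagonal.mem_antidiagonal] at hx
    by_cases hx1 : x.1 < w.length
    · rw [mm_small hx1]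
      norm_num
    · rw [show cc w x.2 = 0 by rw [cc, if_neg (by omega)]]
      norm_num

lemma E4 (hb : b ≠ 0) (hw : 1 ≤ w.length) : Ss w = 1 + Ds w * Aw b w := by
  apply PowerSeries.ext
  intro n
  rw [map_add, PowerSeries.coeff_one, PowerSeries.coeff_mul, Ss, PowerSeries.coeff_mk]
  have hconv : ∀ x ∈ Finset.HasAntidiagonal.antidiagonal n,
      (PowerSeries.coeff x.1) (Ds w) * (PowerSeries.coeff x.2) (Aw b w)
        = ((dd w x.1 * cc w x.2 : ℕ) : ℚ) := by
    intro x _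
    rw [Ds, PowerSeries.coeff_mk, coeff_Aw w hb]
    push_cast
    ring
  rw [Finset.sum_congr rfl hconv, ← Nat.cast_sum]
  cases n with
  | zero =>
    rw [if_pos rfl, ss_zero w hw]
    have : ∑ x ∈ Finset.HasAntidiagonal.antidiagonal 0, dd w x.1 * cc w x.2 = 0 := by
      rw [Finset.Nat.antidiagonal_zero, Finset.sum_singleton, dd_zero w hw, zero_mul]
    rw [this]
    norm_num
  | succ m =>
    rw [if_neg (by omega), I4c w hw (show 1 ≤ m + 1 by omega)]
    norm_num

lemma E5 (hb : b ≠ 0) (hw : 1 ≤ w.length) : Ss w = Aw b w + X ^ w.length * Ys w 0 := by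
  apply PowerSeries.ext
  intro n
  rw [map_add, coeff_Aw w hb, Ss, PowerSeries.coeff_mk]
  have hXp : (PowerSeries.coeff n) (X ^ w.length * Ys w 0)
      = if w.length ≤ n then (yy w 0 (n - w.length) : ℚ) else 0 := by
    rw [PowerSeries.coeff_mul, Finset.Nat.sum_antidiagonal_eq_sum_range_succ_mk]
    by_cases h : w.length ≤ n
    · rw [if_pos h, Finset.sum_eq_single_of_mem w.length (Finset.mem_range.2 (by omega))]
      · rw [PowerSeries.coeff_X_pow, if_pos rfl, one_mul, Ys, PowerSeries.coeff_mk]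
      · intro j _ hne
        rw [PowerSeries.coeff_X_pow, if_neg (by omega), zero_mul]
    · rw [if_neg h]
      apply Finset.sum_eq_zero
      intro j hj
      rw [Finset.mem_range] at hj
      rw [PowerSeries.coeff_X_pow, if_neg (by omega), zero_mul]
  rw [hXp]
  by_cases h : w.length ≤ n
  · rw [if_pos h, I4b w hw h, show cc w n = 0 by rw [cc, if_neg (by omega)]]
    norm_num
  · rw [if_neg h, I4a w hw (by omega)]
    norm_num

lemma Zser_coeff (k l : ℕ) : (PowerSeries.coeff l) (Zser b w [] [] k) = (zc w k l : ℚ) := by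
  rw [Zser, PowerSeries.coeff_mk, Nxy_eq_cnt, zc]

lemma E6 (hw : 1 ≤ w.length) (k : ℕ) : Zser b w [] [] (k + 1) = Ms w * Ys w k := by
  apply PowerSeries.ext
  intro n
  rw [Zser_coeff, PowerSeries.coeff_mul, I5 w hw k n, Nat.cast_sum]
  apply Finset.sum_congr rfl
  intro x _
  rw [Ms, Ys, PowerSeries.coeff_mk, PowerSeries.coeff_mk]
  push_cast
  ring

lemma E7 (hw : 1 ≤ w.length) (j : ℕ) : Ys w (j + 1) = Ds w * Ys w j := by
  apply PowerSeries.ext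
  intro n
  rw [PowerSeries.coeff_mul, Ys, PowerSeries.coeff_mk, I6 w hw j n, Nat.cast_sum]
  apply Finset.sum_congr rfl
  intro x _
  rw [Ds, Ys, PowerSeries.coeff_mk, PowerSeries.coeff_mk]
  push_cast
  ring

lemma part1 (hb : 0 < b) (hw : 1 ≤ w.length) (j : ℕ) :
    ((1 - PowerSeries.C (b : ℚ) * X) * Aw b w + X ^ w.length) ^ (j + 1 + 1) *
        Zser b w [] [] (j + 1) =
      X ^ w.length *
        ((1 - PowerSeries.C (b : ℚ) * X) * (Aw b w - 1) + X ^ w.length) ^ j := by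
  have hb' : b ≠ 0 := by omega
  set q : PowerSeries ℚ := 1 - PowerSeries.C (b : ℚ) * X with hq
  set F : PowerSeries ℚ := q * Aw b w + X ^ w.length with hF
  set G : PowerSeries ℚ := q * (Aw b w - 1) + X ^ w.length with hG
  have hGF : G = F - q := by rw [hG, hF]; ring
  have hFN : F * Ns w = Aw b w := by
    calc F * Ns w = (q * Ns w) * Aw b w + (X ^ w.length * Ns w) := by rw [hF]; ring
    _ = (1 - Ms w) * Aw b w + Ms w * Aw b w := by rw [E1 w hb hw, E2 w hb' hw]
    _ = Aw b w := by ring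
  have hMeq : Ms w = 1 - q * Ns w := by rw [E1 w hb hw]; ring
  have hFM : F * Ms w = X ^ w.length := by
    calc F * Ms w = F - q * (F * Ns w) := by rw [hMeq]; ring
    _ = F - q * Aw b w := by rw [hFN]
    _ = X ^ w.length := by rw [hF]; ring
  have hXpY : X ^ w.length * Ys w 0 = Ss w - Aw b w := by rw [E5 w hb' hw]; ring
  have hFE : F * Ys w 0 = 1 := by
    calc F * Ys w 0 = (q * Ys w 0) * Aw b w + (X ^ w.length * Ys w 0) := by rw [hF]; ring
    _ = (1 - Ds w) * Aw b w + (Ss w - Aw b w) := by rw [E3 w hb hw, hXpY]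
    _ = (1 - Ds w) * Aw b w + ((1 + Ds w * Aw b w) - Aw b w) := by rw [E4 w hb' hw]
    _ = 1 := by ring
  have hDeq : Ds w = 1 - q * Ys w 0 := by rw [E3 w hb hw]; ring
  have hFD : F * Ds w = G := by
    calc F * Ds w = F - q * (F * Ys w 0) := by rw [hDeq]; ring
    _ = F - q * 1 := by rw [hFE]
    _ = G := by rw [hGF]; ring
  have hFY : ∀ i : ℕ, F ^ (i + 1) * Ys w i = G ^ i := by
    intro i
    induction i with
    | zero => rw [pow_one, hFE, pow_zero]
    | succ m ih =>
      calc F ^ (m + 1 + 1) * Ys w (m + 1) = F ^ (m + 1 + 1) * (Ds w * Ys w m) := by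
            rw [E7 w hw]
      _ = (F * Ds w) * (F ^ (m + 1) * Ys w m) := by ring
      _ = G * G ^ m := by rw [hFD, ih]
      _ = G ^ (m + 1) := by ring
  calc F ^ (j + 1 + 1) * Zser b w [] [] (j + 1) = F ^ (j + 1 + 1) * (Ms w * Ys w j) := by
        rw [E6 w hw]
  _ = (F * Ms w) * (F ^ (j + 1) * Ys w j) := by ring
  _ = X ^ w.length * G ^ j := by rw [hFM, hFY]

/- ## analysis at t = 1/b -/

lemma cnt_le_pow {l : ℕ} (P : List (Fin b) → Prop) [DecidablePred P] : cnt b l P ≤ b ^ l :=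
  le_of_le_of_eq (Finset.card_filter_le _ _) (card_Lists l)

lemma decay (hw : 1 ≤ w.length) (l : ℕ) :
    zc w 0 (l + w.length) ≤ zc w 0 l * (b ^ w.length - 1) := by
  unfold zc cnt
  have herase : ((Lists b w.length).erase w).card = b ^ w.length - 1 := by
    rw [Finset.card_erase_of_mem (mem_Lists.2 rfl), card_Lists]
  rw [show (Finset.filter (fun X => occCount w X = 0) (Lists b l)).card * (b ^ w.length - 1)
      = ((Finset.filter (fun X => occCount w X = 0) (Lists b l)) ×ˢ
          ((Lists b w.length).erase w)).card by
    rw [Finset.card_product, herase]]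
  apply Finset.card_le_card_of_injOn (fun X => (X.take l, X.drop l))
  · intro X hX
    simp only [Finset.mem_coe, Finset.mem_filter, mem_Lists] at hX
    obtain ⟨hlen, hfree⟩ := hX
    rw [occCount_eq_oCnt, hlen] at hfree
    simp only [Finset.mem_coe, Finset.mem_product, Finset.mem_filter, Finset.mem_erase, mem_Lists]
    refine ⟨⟨by rw [List.length_take]; omega, ?_⟩, ?_, by rw [List.length_drop]; omega⟩
    · rw [occCount_eq_oCnt, List.length_take, show min l X.length = l by omega]
      apply oCnt_eq_zero
      intro t _ h2 hA
      have h3 := hA.le hw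
      rw [List.length_take] at h3
      rw [oA_take (by omega)] at hA
      have := oCnt_pos (a := 0) (c := l + w.length) (Nat.zero_le t) (by omega) hA
      omega
    · intro hcon
      have hoAl : oA w X l := by
        rw [oA, hcon, List.take_length]
      have := oCnt_pos (a := 0) (c := l + w.length) (Nat.zero_le l) (by omega) hoAl
      omega
  · intro X hX Y hY hXY
    simp only [Finset.coe_filter, Set.mem_setOf_eq, mem_Lists] at hX hY
    have hXY' : (X.take l, X.drop l) = (Y.take l, Y.drop l) := hXY
    obtain ⟨e1, e2⟩ := Prod.mk.injEq .. ▸ hXY'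
    have h1 : X.take l ++ X.drop l = Y.take l ++ Y.drop l := by rw [e1, e2]
    rwa [List.take_append_drop, List.take_append_drop] at h1

lemma zc_pow_bound (hw : 1 ≤ w.length) (q s : ℕ) :
    zc w 0 (q * w.length + s) ≤ (b ^ w.length - 1) ^ q * b ^ s := by
  induction q with
  | zero =>
    simp only [Nat.zero_mul, Nat.zero_add, pow_zero, Nat.one_mul, one_mul, zero_add]
    rw [zc]
    exact cnt_le_pow _
  | succ m ih =>
    have e : (m + 1) * w.length + s = (m * w.length + s) + w.length := by ring
    rw [e]
    calc zc w 0 ((m * w.length + s) + w.length)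
        ≤ zc w 0 (m * w.length + s) * (b ^ w.length - 1) := decay w hw _
    _ ≤ ((b ^ w.length - 1) ^ m * b ^ s) * (b ^ w.length - 1) :=
        Nat.mul_le_mul_right _ ih
    _ = (b ^ w.length - 1) ^ (m + 1) * b ^ s := by ring

noncomputable def θr (b p : ℕ) : ℝ := ((b : ℝ) ^ p - 1) / (b : ℝ) ^ p

lemma theta_nonneg (hb : 1 < b) (p : ℕ) : 0 ≤ θr b p := by
  have h1 : (1:ℝ) ≤ (b:ℝ) ^ p := one_le_pow₀ (by exact_mod_cast hb.le)
  have h2 : (0:ℝ) < (b:ℝ) ^ p := by positivity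
  rw [θr]
  apply div_nonneg (by linarith) h2.le

lemma theta_lt_one (hb : 1 < b) (p : ℕ) : θr b p < 1 := by
  have h2 : (0:ℝ) < (b:ℝ) ^ p := by positivity
  rw [θr, div_lt_one h2]
  linarith

lemma f0_le (hb : 1 < b) (hw : 1 ≤ w.length) (l : ℕ) :
    (zc w 0 l : ℝ) * ((b : ℝ)⁻¹) ^ l ≤ θr b w.length ^ (l / w.length) := by
  have hb0 : (0:ℝ) < (b:ℝ) := by exact_mod_cast Nat.lt_of_lt_of_le Nat.zero_lt_one hb.le
  have hcount : zc w 0 l ≤ (b ^ w.length - 1) ^ (l / w.length) * b ^ (l % w.length) := by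
    have h := zc_pow_bound w hw (l / w.length) (l % w.length)
    rwa [show l / w.length * w.length + l % w.length = l by
      rw [mul_comm]; exact Nat.div_add_mod l w.length] at h
  have h1 : ((b ^ w.length - 1 : ℕ) : ℝ) = (b:ℝ) ^ w.length - 1 := by
    have hle : 1 ≤ b ^ w.length := Nat.one_le_pow _ _ (by omega)
    push_cast [hle]
    ring
  have hcastc : (zc w 0 l : ℝ) ≤
      ((b:ℝ) ^ w.length - 1) ^ (l / w.length) * (b:ℝ) ^ (l % w.length) := by
    calc (zc w 0 l : ℝ)
        ≤ (((b ^ w.length - 1) ^ (l / w.length) * b ^ (l % w.length) : ℕ) : ℝ) := by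
          exact_mod_cast hcount
    _ = _ := by push_cast [h1]; ring
  have hbl : ((b:ℝ) ^ w.length) ^ (l / w.length) * (b:ℝ) ^ (l % w.length) = (b:ℝ) ^ l := by
    rw [← pow_mul, ← pow_add]
    congr 1
    exact Nat.div_add_mod l w.length
  have key : (((b:ℝ) ^ w.length - 1) ^ (l / w.length) * (b:ℝ) ^ (l % w.length))
      * ((b:ℝ)⁻¹) ^ l = θr b w.length ^ (l / w.length) := by
    rw [θr, div_pow, inv_pow, ← hbl]
    have hne1 : ((b:ℝ) ^ w.length) ^ (l / w.length) ≠ 0 := by positivity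
    have hne2 : (b:ℝ) ^ (l % w.length) ≠ 0 := by positivity
    field_simp
  calc (zc w 0 l : ℝ) * ((b : ℝ)⁻¹) ^ l
      ≤ (((b:ℝ) ^ w.length - 1) ^ (l / w.length) * (b:ℝ) ^ (l % w.length))
        * ((b:ℝ)⁻¹) ^ l := by
        apply mul_le_mul_of_nonneg_right hcastc (by positivity)
  _ = _ := key

lemma sum_theta (hb : 1 < b) (hw : 1 ≤ w.length) :
    Summable (fun l => θr b w.length ^ (l / w.length)) := by
  haveI : NeZero w.length := ⟨by omega⟩
  rw [← Equiv.summable_iff (Nat.divModEquiv w.length).symm]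
  have he : ((fun l => θr b w.length ^ (l / w.length)) ∘ (Nat.divModEquiv w.length).symm)
      = fun x : ℕ × Fin w.length => θr b w.length ^ x.1 := by
    funext x
    obtain ⟨q, i⟩ := x
    simp only [Function.comp_apply, Nat.divModEquiv, Equiv.coe_fn_symm_mk]
    congr 1
    rw [mul_comm, Nat.mul_add_div (by omega), Nat.div_eq_of_lt i.isLt, Nat.add_zero]
  rw [he]
  apply (summable_prod_of_nonneg ?_).2 ⟨?_, ?_⟩
  · intro x
    exact pow_nonneg (theta_nonneg hb _) _
  · intro q
    exact Summable.of_finite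
  · have : (fun q : ℕ => ∑' _ : Fin w.length, θr b w.length ^ q)
        = fun q : ℕ => (w.length : ℝ) * θr b w.length ^ q := by
      funext q
      rw [tsum_const]
      simp [nsmul_eq_mul]
    rw [this]
    exact (summable_geometric_of_lt_one (theta_nonneg hb _) (theta_lt_one hb _)).mul_left _

lemma sum_f0 (hb : 1 < b) (hw : 1 ≤ w.length) :
    Summable (fun l => (zc w 0 l : ℝ) * ((b : ℝ)⁻¹) ^ l) :=
  Summable.of_nonneg_of_le (fun l => by positivity) (f0_le w hb hw) (sum_theta w hb hw)

lemma yy_le_zc (hw : 1 ≤ w.length) (l : ℕ) : yy w 0 l ≤ zc w 0 l := by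
  unfold yy zc cnt
  apply Finset.card_le_card
  intro u hu
  simp only [Finset.mem_filter, mem_Lists] at hu ⊢
  obtain ⟨hlen, h0⟩ := hu
  refine ⟨hlen, ?_⟩
  rw [occCount_eq_oCnt, hlen]
  apply oCnt_eq_zero
  intro t _ h2 hA
  have hA2 : oA w ((w ++ u).drop w.length) t := by
    rw [List.drop_left' rfl]
    exact hA
  rw [oA_drop] at hA2
  have := oCnt_pos (a := 1) (c := w.length + u.length) (show 1 ≤ w.length + t by omega)
    (by omega) hA2
  omega

lemma sum_fE (hb : 1 < b) (hw : 1 ≤ w.length) :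
    Summable (fun l => (yy w 0 l : ℝ) * ((b : ℝ)⁻¹) ^ l) :=
  Summable.of_nonneg_of_le (fun l => by positivity)
    (fun l => by
      have := yy_le_zc w hw l
      have hcast : (yy w 0 l : ℝ) ≤ (zc w 0 l : ℝ) := by exact_mod_cast this
      apply mul_le_mul_of_nonneg_right hcast (by positivity))
    (sum_f0 w hb hw)

lemma telescope (hb : 1 < b) (g h : ℕ → ℕ) (hrec : ∀ l, g (l + 1) + h (l + 1) = b * g l)
    (hg0 : g 0 = 1) (hh0 : h 0 = 0)
    (hsg : Summable (fun l => (g l : ℝ) * ((b : ℝ)⁻¹) ^ l)) :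
    Summable (fun l => (h l : ℝ) * ((b : ℝ)⁻¹) ^ l) ∧
      (∑' l, (h l : ℝ) * ((b : ℝ)⁻¹) ^ l) = 1 := by
  set r : ℝ := (b : ℝ)⁻¹ with hr
  have hb0 : (0:ℝ) < (b:ℝ) := by
    have : 0 < b := by omega
    exact_mod_cast this
  have hbr : (b : ℝ) * r = 1 := mul_inv_cancel₀ (ne_of_gt hb0)
  have hstep : ∀ l, (g l : ℝ) * r ^ l - (g (l+1) : ℝ) * r ^ (l+1) = (h (l+1) : ℝ) * r ^ (l+1) := by
    intro l
    have hc : ((g (l+1) : ℝ) + (h (l+1) : ℝ)) = (b:ℝ) * (g l : ℝ) := by exact_mod_cast hrec l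
    have e : (g l : ℝ) * r ^ l = ((b:ℝ) * (g l : ℝ)) * r ^ (l+1) := by
      rw [pow_succ]
      calc (g l : ℝ) * r ^ l = ((b:ℝ) * r) * ((g l : ℝ) * r ^ l) := by rw [hbr]; ring
      _ = ((b:ℝ) * (g l : ℝ)) * (r ^ l * r) := by ring
    rw [e, ← hc]
    ring
  have hpartial : ∀ L, ∑ i ∈ Finset.range (L+1), (h i : ℝ) * r ^ i = 1 - (g L : ℝ) * r ^ L := by
    intro L
    rw [Finset.sum_range_succ']
    have e : ∑ i ∈ Finset.range L, (h (i+1) : ℝ) * r ^ (i+1)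
        = (g 0 : ℝ) * r ^ 0 - (g L : ℝ) * r ^ L := by
      rw [← Finset.sum_range_sub' (fun i => (g i : ℝ) * r ^ i) L]
      exact Finset.sum_congr rfl (fun i _ => (hstep i).symm)
    rw [e, hg0, hh0]
    norm_num
  have hnn : ∀ i, 0 ≤ (h i : ℝ) * r ^ i := fun i => by positivity
  have hsum : Summable (fun l => (h l : ℝ) * r ^ l) := by
    apply summable_of_sum_range_le (c := 1) hnn
    intro n
    cases n with
    | zero => simp
    | succ L =>
      rw [hpartial L]
      have : 0 ≤ (g L : ℝ) * r ^ L := by positivity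
      linarith
  refine ⟨hsum, ?_⟩
  apply HasSum.tsum_eq
  rw [hasSum_iff_tendsto_nat_of_nonneg hnn]
  rw [← Filter.tendsto_add_atTop_iff_nat 1]
  have e : (fun L => ∑ i ∈ Finset.range (L+1), (h i : ℝ) * r ^ i)
      = fun L => 1 - (g L : ℝ) * r ^ L := funext hpartial
  rw [e]
  have hzero : Filter.Tendsto (fun L => (g L : ℝ) * r ^ L) Filter.atTop (nhds 0) :=
    hsg.tendsto_atTop_zero
  simpa using hzero.const_sub 1

lemma cauchy {f g : ℕ → ℝ} (hf0 : ∀ n, 0 ≤ f n) (hg0 : ∀ n, 0 ≤ g n)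
    (hf : Summable f) (hg : Summable g) :
    Summable (fun n => ∑ kl ∈ Finset.HasAntidiagonal.antidiagonal n, f kl.1 * g kl.2) ∧
      (∑' n, ∑ kl ∈ Finset.HasAntidiagonal.antidiagonal n, f kl.1 * g kl.2) = (∑' n, f n) * (∑' n, g n) := by
  have hfn : Summable (fun n => ‖f n‖) := by
    simpa [Real.norm_eq_abs, abs_of_nonneg (hf0 _)] using hf
  have hgn : Summable (fun n => ‖g n‖) := by
    simpa [Real.norm_eq_abs, abs_of_nonneg (hg0 _)] using hg
  exact ⟨summable_sum_mul_antidiagonal_of_summable_mul (summable_mul_of_summable_norm hfn hgn),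
    (tsum_mul_tsum_eq_tsum_sum_antidiagonal_of_summable_norm hfn hgn).symm⟩

lemma cc_large {i : ℕ} (h : ¬ i < w.length) : cc w i = 0 := by
  rw [cc, if_neg (by tauto)]

lemma sum_ccterm : Summable (fun i => (cc w i : ℝ) * ((b : ℝ)⁻¹) ^ i) := by
  apply summable_of_ne_finset_zero (s := Finset.range w.length)
  intro i hi
  rw [Finset.mem_range] at hi
  rw [cc_large w hi]
  norm_num

lemma tsum_ccterm : (∑' i, (cc w i : ℝ) * ((b : ℝ)⁻¹) ^ i)
    = ∑ i ∈ Finset.range w.length, (cc w i : ℝ) * ((b : ℝ)⁻¹) ^ i := by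
  apply tsum_eq_sum
  intro i hi
  rw [Finset.mem_range] at hi
  rw [cc_large w hi]
  norm_num

lemma tsum_mm (hb : 1 < b) (hw : 1 ≤ w.length) :
    Summable (fun l => (mm w l : ℝ) * ((b : ℝ)⁻¹) ^ l) ∧
      (∑' l, (mm w l : ℝ) * ((b : ℝ)⁻¹) ^ l) = 1 :=
  telescope hb (zc w 0) (mm w) (I1 w (by omega) hw) (zc_zero_zero w) (mm_zero w)
    (sum_f0 w hb hw)

lemma tsum_dd (hb : 1 < b) (hw : 1 ≤ w.length) :
    Summable (fun l => (dd w l : ℝ) * ((b : ℝ)⁻¹) ^ l) ∧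
      (∑' l, (dd w l : ℝ) * ((b : ℝ)⁻¹) ^ l) = 1 :=
  telescope hb (yy w 0) (dd w) (I1' w (by omega) hw) (yy_zero_zero w hw) (dd_zero w hw)
    (sum_fE w hb hw)

lemma tsum_E (hb : 1 < b) (hw : 1 ≤ w.length) :
    (∑' l, (yy w 0 l : ℝ) * ((b : ℝ)⁻¹) ^ l) = (b : ℝ) ^ w.length := by
  set r : ℝ := (b : ℝ)⁻¹ with hr
  have hb0 : (0:ℝ) < (b:ℝ) := by
    have : 0 < b := by omega
    exact_mod_cast this
  set SA : ℝ := ∑ i ∈ Finset.range w.length, (cc w i : ℝ) * r ^ i with hSA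
  set SE : ℝ := ∑' l, (yy w 0 l : ℝ) * r ^ l with hSE
  have hs_shift : ∀ n, (ss w (n + w.length) : ℝ) * r ^ (n + w.length)
      = r ^ w.length * ((yy w 0 n : ℝ) * r ^ n) := by
    intro n
    rw [I4b w hw (show w.length ≤ n + w.length by omega),
      show n + w.length - w.length = n by omega, pow_add]
    ring
  have hsum_s : Summable (fun n => (ss w n : ℝ) * r ^ n) := by
    rw [← summable_nat_add_iff w.length]
    rw [funext hs_shift]
    exact (sum_fE w hb hw).mul_left _
  have e1 : (∑' n, (ss w n : ℝ) * r ^ n) = SA + r ^ w.length * SE := by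
    rw [← Summable.sum_add_tsum_nat_add w.length hsum_s]
    congr 1
    · apply Finset.sum_congr rfl
      intro i hi
      rw [Finset.mem_range] at hi
      rw [I4a w hw hi]
    · rw [funext hs_shift, tsum_mul_left]
  have hptwise : ∀ n, (ss w n : ℝ) * r ^ n = (if n = 0 then (1:ℝ) else 0)
      + ∑ kl ∈ Finset.HasAntidiagonal.antidiagonal n,
          ((dd w kl.1 : ℝ) * r ^ kl.1) * ((cc w kl.2 : ℝ) * r ^ kl.2) := by
    intro n
    cases n with
    | zero =>
      rw [if_pos rfl, ss_zero w hw, Finset.Nat.antidiagonal_zero, Finset.sum_singleton]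
      rw [dd_zero w hw]
      norm_num
    | succ m =>
      rw [if_neg (by omega), I4c w hw (by omega), zero_add, Nat.cast_sum, Finset.sum_mul]
      apply Finset.sum_congr rfl
      intro x hx
      rw [Finset.HasAntidiagonal.mem_antidiagonal] at hx
      rw [← hx, pow_add]
      push_cast
      ring
  have hδ : Summable (fun n : ℕ => if n = 0 then (1:ℝ) else 0) := by
    apply summable_of_ne_finset_zero (s := {0})
    intro i hi
    simp only [Finset.mem_singleton] at hi
    rw [if_neg hi]
  have htδ : (∑' n : ℕ, if n = 0 then (1:ℝ) else 0) = 1 := by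
    rw [tsum_eq_sum (s := {0}) (fun i hi => by
      simp only [Finset.mem_singleton] at hi
      rw [if_neg hi])]
    simp
  have hconv := cauchy (f := fun l => (dd w l : ℝ) * r ^ l)
    (g := fun i => (cc w i : ℝ) * r ^ i)
    (fun n => by positivity) (fun n => by positivity) (tsum_dd w hb hw).1 (sum_ccterm w)
  have e2 : (∑' n, (ss w n : ℝ) * r ^ n) = 1 + SA := by
    rw [funext hptwise, Summable.tsum_add hδ hconv.1, htδ, hconv.2, (tsum_dd w hb hw).2, one_mul,
      tsum_ccterm w]
  have key : r ^ w.length * SE = 1 := by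
    rw [e2] at e1
    linarith
  have hfin : (b:ℝ) ^ w.length * (r ^ w.length * SE) = (b:ℝ) ^ w.length := by
    rw [key, mul_one]
  rw [← mul_assoc, ← mul_pow, mul_inv_cancel₀ (ne_of_gt hb0), one_pow, one_mul] at hfin
  exact hfin

lemma tsum_Y (hb : 1 < b) (hw : 1 ≤ w.length) (j : ℕ) :
    Summable (fun l => (yy w j l : ℝ) * ((b : ℝ)⁻¹) ^ l) ∧
      (∑' l, (yy w j l : ℝ) * ((b : ℝ)⁻¹) ^ l) = (b : ℝ) ^ w.length := by
  induction j with
  | zero => exact ⟨sum_fE w hb hw, tsum_E w hb hw⟩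
  | succ m ih =>
    have hptwise : ∀ n, (yy w (m + 1) n : ℝ) * ((b : ℝ)⁻¹) ^ n
        = ∑ kl ∈ Finset.HasAntidiagonal.antidiagonal n,
            ((dd w kl.1 : ℝ) * ((b : ℝ)⁻¹) ^ kl.1) * ((yy w m kl.2 : ℝ) * ((b : ℝ)⁻¹) ^ kl.2) := by
      intro n
      rw [I6 w hw m n, Nat.cast_sum, Finset.sum_mul]
      apply Finset.sum_congr rfl
      intro x hx
      rw [Finset.HasAntidiagonal.mem_antidiagonal] at hx
      rw [← hx, pow_add]
      push_cast
      ring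
    have hconv := cauchy (f := fun l => (dd w l : ℝ) * ((b : ℝ)⁻¹) ^ l)
      (g := fun l => (yy w m l : ℝ) * ((b : ℝ)⁻¹) ^ l)
      (fun n => by positivity) (fun n => by positivity) (tsum_dd w hb hw).1 ih.1
    constructor
    · rw [funext hptwise]
      exact hconv.1
    · rw [funext hptwise, hconv.2, (tsum_dd w hb hw).2, one_mul, ih.2]

lemma part2 (hb : 1 < b) (hw : 1 ≤ w.length) (j : ℕ) :
    (∑' l, (Nxy b w [] [] (j + 1) l : ℝ) * ((b : ℝ)⁻¹) ^ l) = (b : ℝ) ^ w.length := by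
  have hptwise : ∀ n, (Nxy b w [] [] (j + 1) n : ℝ) * ((b : ℝ)⁻¹) ^ n
      = ∑ kl ∈ Finset.HasAntidiagonal.antidiagonal n,
          ((mm w kl.1 : ℝ) * ((b : ℝ)⁻¹) ^ kl.1) * ((yy w j kl.2 : ℝ) * ((b : ℝ)⁻¹) ^ kl.2) := by
    intro n
    rw [Nxy_eq_cnt, ← zc, I5 w hw j n, Nat.cast_sum, Finset.sum_mul]
    apply Finset.sum_congr rfl
    intro x hx
    rw [Finset.HasAntidiagonal.mem_antidiagonal] at hx
    rw [← hx, pow_add]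
    push_cast
    ring
  have hconv := cauchy (f := fun l => (mm w l : ℝ) * ((b : ℝ)⁻¹) ^ l)
    (g := fun l => (yy w j l : ℝ) * ((b : ℝ)⁻¹) ^ l)
    (fun n => by positivity) (fun n => by positivity) (tsum_mm w hb hw).1 (tsum_Y w hb hw j).1
  rw [funext hptwise, hconv.2, (tsum_mm w hb hw).2, one_mul, (tsum_Y w hb hw j).2]

lemma part3 (hb : 1 < b) (hw : 1 ≤ w.length) :
    (∑' l, (Nxy b w [] [] 0 l : ℝ) * ((b : ℝ)⁻¹) ^ l)
      = (b : ℝ) ^ w.length * ∑ i ∈ Finset.range w.length, (cc w i : ℝ) * ((b : ℝ)⁻¹) ^ i := by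
  set r : ℝ := (b : ℝ)⁻¹ with hr
  have hb0 : (0:ℝ) < (b:ℝ) := by
    have : 0 < b := by omega
    exact_mod_cast this
  have hNeq : ∀ l, (Nxy b w [] [] 0 l : ℝ) * r ^ l = (zc w 0 l : ℝ) * r ^ l := by
    intro l
    rw [Nxy_eq_cnt, ← zc]
  have hconv := cauchy (f := fun l => (mm w l : ℝ) * r ^ l)
    (g := fun i => (cc w i : ℝ) * r ^ i)
    (fun n => by positivity) (fun n => by positivity) (tsum_mm w hb hw).1 (sum_ccterm w)
  have hF : ∀ n, (∑ kl ∈ Finset.HasAntidiagonal.antidiagonal n,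
      ((mm w kl.1 : ℝ) * r ^ kl.1) * ((cc w kl.2 : ℝ) * r ^ kl.2))
        = if w.length ≤ n then r ^ w.length * ((zc w 0 (n - w.length) : ℝ) * r ^ (n - w.length))
          else 0 := by
    intro n
    by_cases h : w.length ≤ n
    · rw [if_pos h]
      have hI := I2 w hw (n - w.length)
      rw [show n - w.length + w.length = n by omega] at hI
      have e : ∑ kl ∈ Finset.HasAntidiagonal.antidiagonal n,
          ((mm w kl.1 : ℝ) * r ^ kl.1) * ((cc w kl.2 : ℝ) * r ^ kl.2)
            = ((∑ kl ∈ Finset.HasAntidiagonal.antidiagonal n, mm w kl.1 * cc w kl.2 : ℕ) : ℝ) * r ^ n := by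
        rw [Nat.cast_sum, Finset.sum_mul]
        apply Finset.sum_congr rfl
        intro x hx
        rw [Finset.HasAntidiagonal.mem_antidiagonal] at hx
        rw [← hx, pow_add]
        push_cast
        ring
      rw [e, ← hI]
      have epow : r ^ n = r ^ w.length * r ^ (n - w.length) := by
        rw [← pow_add, show w.length + (n - w.length) = n by omega]
      rw [epow]
      ring
    · rw [if_neg h]
      apply Finset.sum_eq_zero
      intro x hx
      rw [Finset.HasAntidiagonal.mem_antidiagonal] at hx
      rw [mm_small (show x.1 < w.length by omega)]
      norm_num
  have hsumF : Summable (fun n => if w.length ≤ n then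
      r ^ w.length * ((zc w 0 (n - w.length) : ℝ) * r ^ (n - w.length)) else 0) := by
    rw [← funext hF]
    exact hconv.1
  have e3 : (∑' n, (if w.length ≤ n then
      r ^ w.length * ((zc w 0 (n - w.length) : ℝ) * r ^ (n - w.length)) else 0))
        = r ^ w.length * (∑' l, (zc w 0 l : ℝ) * r ^ l) := by
    rw [← Summable.sum_add_tsum_nat_add w.length hsumF]
    have h1 : ∑ i ∈ Finset.range w.length, (if w.length ≤ i then
        r ^ w.length * ((zc w 0 (i - w.length) : ℝ) * r ^ (i - w.length)) else 0) = 0 := by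
      apply Finset.sum_eq_zero
      intro i hi
      rw [Finset.mem_range] at hi
      rw [if_neg (by omega)]
    have h2 : ∀ n : ℕ, (if w.length ≤ n + w.length then
        r ^ w.length * ((zc w 0 (n + w.length - w.length) : ℝ) * r ^ (n + w.length - w.length))
          else 0) = r ^ w.length * ((zc w 0 n : ℝ) * r ^ n) := by
      intro n
      rw [if_pos (by omega), show n + w.length - w.length = n by omega]
    rw [h1, funext h2, tsum_mul_left, zero_add]
  have key : r ^ w.length * (∑' l, (zc w 0 l : ℝ) * r ^ l)
      = ∑ i ∈ Finset.range w.length, (cc w i : ℝ) * r ^ i := by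
    rw [← e3, ← funext hF, hconv.2, (tsum_mm w hb hw).2, one_mul, tsum_ccterm w]
  rw [funext hNeq]
  have hfin := congrArg (fun x => (b:ℝ) ^ w.length * x) key
  rw [← mul_assoc, ← mul_pow, mul_inv_cancel₀ (ne_of_gt hb0), one_pow, one_mul] at hfin
  exact hfin

end S15

/-- For `k ≥ 1`, `Z_w(k) = t^p ((1-bt)(A_w-1) + t^p)^{k-1} / ((1-bt)A_w + t^p)^{k+1}`
(stated multiplied through by the denominator); in particular the total masses are
`Z_w(k)(1/b) = b^p` for `k ≥ 1` and `Z_w(0)(1/b) = b^p A_w(1/b)`. -/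
theorem stmt15 (b : ℕ) (hb : 1 < b) (w : List (Fin b)) (hw : 1 ≤ w.length) :
    (∀ k : ℕ, 1 ≤ k →
      ((1 - PowerSeries.C (b : ℚ) * X) * Aw b w + X ^ w.length) ^ (k + 1) *
          Zser b w [] [] k =
        X ^ w.length *
          ((1 - PowerSeries.C (b : ℚ) * X) * (Aw b w - 1) + X ^ w.length) ^ (k - 1)) ∧
    (∀ k : ℕ, 1 ≤ k →
      ∑' l : ℕ, (Nxy b w [] [] k l : ℝ) * ((b : ℝ)⁻¹) ^ l = (b : ℝ) ^ w.length) ∧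
    ∑' l : ℕ, (Nxy b w [] [] 0 l : ℝ) * ((b : ℝ)⁻¹) ^ l =
      (b : ℝ) ^ w.length *
        ∑ i ∈ Finset.range w.length,
          (if w.take (w.length - i) = w.drop i then ((b : ℝ)⁻¹) ^ i else 0) := by
  refine ⟨?_, ?_, ?_⟩
  · intro k hk
    obtain ⟨j, rfl⟩ : ∃ j, k = j + 1 := ⟨k - 1, by omega⟩
    rw [show j + 1 - 1 = j by omega]
    exact S15.part1 w (by omega) hw j
  · intro k hk
    obtain ⟨j, rfl⟩ : ∃ j, k = j + 1 := ⟨k - 1, by omega⟩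
    exact S15.part2 w hb hw j
  · rw [S15.part3 w hb hw]
    congr 1
    apply Finset.sum_congr rfl
    intro i hi
    rw [Finset.mem_range] at hi
    rw [S15.cc]
    by_cases hc : w.take (w.length - i) = w.drop i
    · rw [if_pos hc, if_pos ⟨hi, hc⟩]
      norm_num
    · rw [if_neg hc, if_neg (by tauto)]
      norm_num
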